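/- arXiv:1802.04862 — 5 statements merged into one kernel-verified Lean document; each statement's English description precedes it below -/
import Mathlib

section
/- Let r ≥ 1 and let w_1, …, w_ℓ be elements of the free group F_r. If the product w_1 w_2 ⋯ w_ℓ does not lie in the commutator subgroup [F_r, F_r], then for every n ≥ 1 one has Tr_{w_1,…,w_ℓ}(n) = 0. -/
open MeasureTheory

/-- The unitary group `U(n)` gets the Borel σ-algebra of its subspace topology. -/
noncomputable instance (n : ℕ) : MeasurableSpace (Matrix.unitaryGroup (Fin n) ℂ) := borel _

/-- `Tr_{w_1,…,w_ℓ}(n)`: the integral over `ℓ` independent Haar-random unitaries of the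
product of traces of the words `w i` evaluated at the random tuple. -/
noncomputable def trwl (r n ℓ : ℕ) (μ : Measure (Matrix.unitaryGroup (Fin n) ℂ))
    [IsProbabilityMeasure μ] (w : Fin ℓ → FreeGroup (Fin r)) : ℂ :=
  ∫ A : Fin r → Matrix.unitaryGroup (Fin n) ℂ,
    ∏ i : Fin ℓ,
      Matrix.trace ((FreeGroup.lift A (w i) : Matrix.unitaryGroup (Fin n) ℂ) :
        Matrix (Fin n) (Fin n) ℂ)
    ∂(Measure.pi fun _ : Fin r => μ)

instance (n : ℕ) : BorelSpace (Matrix.unitaryGroup (Fin n) ℂ) := ⟨rfl⟩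

instance (n : ℕ) : SecondCountableTopology (Matrix (Fin n) (Fin n) ℂ) :=
  inferInstanceAs (SecondCountableTopology (Fin n → Fin n → ℂ))

instance (n : ℕ) : SecondCountableTopology (Matrix.unitaryGroup (Fin n) ℂ) :=
  TopologicalSpace.secondCountableTopology_induced _ _ Subtype.val

/-- Exponent sum of the generator `k` in a word of the free group. -/
def expSum (r : ℕ) (k : Fin r) : FreeGroup (Fin r) →* Multiplicative ℤ :=
  FreeGroup.lift fun j => Multiplicative.ofAdd (if j = k then (1 : ℤ) else 0)

lemma expSum_of (r : ℕ) (k j : Fin r) :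
    expSum r k (FreeGroup.of j) = Multiplicative.ofAdd (if j = k then (1 : ℤ) else 0) := by
  simp [expSum]

lemma exists_expSum_ne (r : ℕ) (p : FreeGroup (Fin r))
    (hp : p ∉ commutator (FreeGroup (Fin r))) :
    ∃ k : Fin r, Multiplicative.toAdd (expSum r k p) ≠ 0 := by
  by_contra h
  push_neg at h
  apply hp
  set χ : FreeGroup (Fin r) →* Abelianization (FreeGroup (Fin r)) :=
    MonoidHom.mk'
      (fun g => ∏ k : Fin r,
        Abelianization.of (FreeGroup.of k) ^ Multiplicative.toAdd (expSum r k g))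
      (by
        intro a b
        simp only [map_mul, toAdd_mul, zpow_add, Finset.prod_mul_distrib]) with hχ
  have hext : χ = Abelianization.of := by
    apply FreeGroup.ext_hom
    intro a
    have h1 : ∀ k : Fin r,
        Abelianization.of (FreeGroup.of k) ^ Multiplicative.toAdd (expSum r k (FreeGroup.of a))
          = if a = k then Abelianization.of (FreeGroup.of k) else 1 := by
      intro k
      rw [expSum_of, toAdd_ofAdd]
      by_cases hak : a = k
      · simp [hak, eq_comm]
      · have : ¬ (a = k) := hak
        simp [hak, fun h' : a = k => hak h']
    calc χ (FreeGroup.of a)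
        = ∏ k : Fin r, if a = k then Abelianization.of (FreeGroup.of k) else 1 := by
          simp only [hχ, MonoidHom.mk'_apply]
          exact Finset.prod_congr rfl fun k _ => h1 k
      _ = Abelianization.of (FreeGroup.of a) := by simp
  have h2 : Abelianization.of p = 1 := by
    rw [← hext]
    simp only [hχ, MonoidHom.mk'_apply, h, zpow_zero, Finset.prod_const_one]
  exact (QuotientGroup.eq_one_iff p).mp h2

/-- If `w₁ w₂ ⋯ w_ℓ` is not in the commutator subgroup of the free group `F_r`, then
`Tr_{w_1,…,w_ℓ}(n) = 0` for every `n ≥ 1`. -/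
theorem trwl_eq_zero_of_not_mem_commutator (r ℓ : ℕ) (hr : 1 ≤ r)
    (w : Fin ℓ → FreeGroup (Fin r))
    (hw : (List.ofFn w).prod ∉ commutator (FreeGroup (Fin r)))
    (n : ℕ) (hn : 1 ≤ n)
    (μ : Measure (Matrix.unitaryGroup (Fin n) ℂ)) [μ.IsHaarMeasure]
    [IsProbabilityMeasure μ] :
    trwl r n ℓ μ w = 0 := by
  classical
  set U := Matrix.unitaryGroup (Fin n) ℂ
  set M := Matrix (Fin n) (Fin n) ℂ
  set p : FreeGroup (Fin r) := (List.ofFn w).prod with hp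
  obtain ⟨k, hk⟩ := exists_expSum_ne r p hw
  set m : ℤ := Multiplicative.toAdd (expSum r k p) with hm
  -- the scalar z = exp(iπ/m)
  set z : ℂ := Complex.exp ((Real.pi / (m : ℝ) : ℝ) * Complex.I) with hzdef
  have habs : ‖z‖ = 1 := Complex.norm_exp_ofReal_mul_I _
  have hz : z ≠ 0 := by
    intro h0; rw [h0] at habs; simp at habs
  set u : ℂˣ := Units.mk0 z hz with hu
  have hzm : z ^ m = -1 := by
    rw [hzdef, ← Complex.exp_int_mul]
    have : ((m : ℂ) * ((Real.pi / (m : ℝ) : ℝ) * Complex.I)) = (Real.pi : ℂ) * Complex.I := by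
      have hmR : (m : ℝ) ≠ 0 := Int.cast_ne_zero.mpr hk
      rw [← mul_assoc]
      congr 1
      have hmC : (m : ℂ) ≠ 0 := Int.cast_ne_zero.mpr hk
      push_cast
      rw [mul_div_assoc']
      rw [mul_comm]
      rw [mul_div_assoc, div_self hmC, mul_one]
    rw [this, Complex.exp_pi_mul_I]
  -- the scalar unitary Z
  have hnsq : Complex.normSq z = 1 := by
    rw [← Complex.sq_norm, habs]; norm_num
  have hZmem : z • (1 : M) ∈ Matrix.unitaryGroup (Fin n) ℂ := by
    constructor
    · show star (z • (1 : M)) * (z • 1) = 1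
      rw [star_smul, star_one, smul_mul_smul_comm, one_mul]
      rw [show star z * z = 1 by
        rw [Complex.star_def, mul_comm, Complex.mul_conj]
        norm_cast]
      simp
    · show (z • (1 : M)) * star (z • 1) = 1
      rw [star_smul, star_one, smul_mul_smul_comm, one_mul]
      rw [show z * star z = 1 by
        rw [Complex.star_def, Complex.mul_conj]
        norm_cast]
      simp
  set Z : U := ⟨z • (1 : M), hZmem⟩ with hZ
  have hZcomm : ∀ x : U, Commute Z x := by
    intro x
    show Z * x = x * Z
    apply Subtype.ext
    show (z • (1 : M)) * (x : M) = (x : M) * (z • 1)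
    rw [smul_mul_assoc, mul_smul_comm, one_mul, mul_one]
  -- value of Z ^ t as a matrix
  have hZval : ∀ t : ℤ, ((Z ^ t : U) : M) = ((u ^ t : ℂˣ) : ℂ) • (1 : M) := by
    have hsZ : Unitary.toUnits Z
        = Units.map (algebraMap ℂ M).toMonoidHom u := by
      apply Units.ext
      show ((Z : M)) = algebraMap ℂ M z
      rw [Algebra.algebraMap_eq_smul_one]
    intro t
    have : Unitary.toUnits (Z ^ t) = Units.map (algebraMap ℂ M).toMonoidHom (u ^ t) := by
      rw [map_zpow, hsZ, ← map_zpow]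
    have hval : ((Z ^ t : U) : M)
        = ((Units.map (algebraMap ℂ M).toMonoidHom (u ^ t) : Mˣ) : M) := by
      rw [← this]; rfl
    rw [hval]
    show algebraMap ℂ M ((u ^ t : ℂˣ) : ℂ) = _
    rw [Algebra.algebraMap_eq_smul_one]
  -- the homomorphism g ↦ Z^{expSum g} * lift A g
  have key : ∀ A : Fin r → U, ∀ g : FreeGroup (Fin r),
      FreeGroup.lift (fun j => (if j = k then Z else 1) * A j) g
        = Z ^ (Multiplicative.toAdd (expSum r k g)) * FreeGroup.lift A g := by
    intro A
    set φ : FreeGroup (Fin r) →* U :=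
      MonoidHom.mk'
        (fun g => Z ^ (Multiplicative.toAdd (expSum r k g)) * FreeGroup.lift A g)
        (by
          intro a b
          simp only [map_mul, toAdd_mul, zpow_add]
          exact Commute.mul_mul_mul_comm
            (((hZcomm (FreeGroup.lift A a)).zpow_left _)) _ _) with hφ
    have : FreeGroup.lift (fun j => (if j = k then Z else 1) * A j) = φ := by
      apply FreeGroup.ext_hom
      intro j
      rw [FreeGroup.lift_apply_of, hφ, MonoidHom.mk'_apply, FreeGroup.lift_apply_of, expSum_of, toAdd_ofAdd]
      by_cases hj : j = k
      · simp [hj]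
      · simp [hj]
    intro g
    rw [this, hφ, MonoidHom.mk'_apply]
  -- the trace identity
  have htr : ∀ A : Fin r → U, ∀ i : Fin ℓ,
      Matrix.trace ((FreeGroup.lift (fun j => (if j = k then Z else 1) * A j) (w i) : U) : M)
        = ((u ^ (Multiplicative.toAdd (expSum r k (w i))) : ℂˣ) : ℂ) *
          Matrix.trace ((FreeGroup.lift A (w i) : U) : M) := by
    intro A i
    rw [key A (w i)]
    have : ((Z ^ (Multiplicative.toAdd (expSum r k (w i))) * FreeGroup.lift A (w i) : U) : M)
        = ((Z ^ (Multiplicative.toAdd (expSum r k (w i))) : U) : M) *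
          ((FreeGroup.lift A (w i) : U) : M) := rfl
    rw [this, hZval, smul_mul_assoc, one_mul, Matrix.trace_smul, smul_eq_mul]
  -- sum of exponents
  have hsum : (∑ i : Fin ℓ, Multiplicative.toAdd (expSum r k (w i))) = m := by
    rw [hm, hp, map_list_prod, List.map_ofFn]
    rw [show ((List.ofFn ((expSum r k) ∘ w)).prod) = ∏ i : Fin ℓ, expSum r k (w i) from
      List.prod_ofFn]
    rw [← toAdd_prod]
  -- invariance step
  set c : Fin r → U := fun j => if j = k then Z else 1 with hc
  have hinv : trwl r n ℓ μ w = z ^ m * trwl r n ℓ μ w := by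
    have h1 : trwl r n ℓ μ w
        = ∫ A : Fin r → U,
            (∏ i : Fin ℓ,
              Matrix.trace ((FreeGroup.lift ((c * A : Fin r → U)) (w i) : U) : M))
            ∂(Measure.pi fun _ : Fin r => μ) := by
      rw [trwl]
      exact (integral_mul_left_eq_self
        (μ := Measure.pi fun _ : Fin r => μ)
        (fun A : Fin r → U => ∏ i : Fin ℓ,
          Matrix.trace ((FreeGroup.lift A (w i) : U) : M)) c).symm
    conv_lhs => rw [h1]
    have h2 : ∀ A : Fin r → U,
        (∏ i : Fin ℓ,
          Matrix.trace ((FreeGroup.lift ((c * A : Fin r → U)) (w i) : U) : M))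
        = z ^ m * ∏ i : Fin ℓ, Matrix.trace ((FreeGroup.lift A (w i) : U) : M) := by
      intro A
      have : ∀ i : Fin ℓ,
          Matrix.trace ((FreeGroup.lift ((c * A : Fin r → U)) (w i) : U) : M)
            = ((u ^ (Multiplicative.toAdd (expSum r k (w i))) : ℂˣ) : ℂ) *
              Matrix.trace ((FreeGroup.lift A (w i) : U) : M) := by
        intro i
        have hca : (c * A : Fin r → U) = fun j => (if j = k then Z else 1) * A j := rfl
        rw [hca]
        exact htr A i
      rw [Finset.prod_congr rfl fun i _ => this i, Finset.prod_mul_distrib]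
      congr 1
      have hcoe : (∏ i : Fin ℓ,
            ((u ^ (Multiplicative.toAdd (expSum r k (w i))) : ℂˣ) : ℂ))
          = ((∏ i : Fin ℓ, (u ^ (Multiplicative.toAdd (expSum r k (w i))) : ℂˣ) : ℂˣ) : ℂ) :=
        (map_prod (Units.coeHom ℂ) _ _).symm
      rw [hcoe]
      have hprodu : (∏ i : Fin ℓ, (u ^ (Multiplicative.toAdd (expSum r k (w i))) : ℂˣ))
          = u ^ m := by
        have h3 := (map_prod (zpowersHom ℂˣ u)
          (fun i => expSum r k (w i)) Finset.univ).symm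
        simp only [zpowersHom_apply, toAdd_prod] at h3
        rw [h3, hsum]
      rw [hprodu, Units.val_zpow_eq_zpow_val, hu, Units.val_mk0]
    simp only [h2]
    rw [MeasureTheory.integral_const_mul]
    rw [trwl]
  rw [hzm] at hinv
  linear_combination hinv / 2
end

section
/- Let r ≥ 1, let w_1 ∈ [F_r,F_r] and let w_2 ∈ F_r with w_2 ∉ [F_r,F_r]. Then there exists N such that for every n ≥ N, the w_1-measure on U(n) is different from the w_2-measure on U(n), i.e. the pushforward of μ_n^{⊗r} under A ↦ w_1(A) differs from the pushforward under A ↦ w_2(A). -/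
open MeasureTheory

instance inst_s6 (n : ℕ) : SecondCountableTopology (Matrix.unitaryGroup (Fin n) ℂ) :=
  Topology.IsEmbedding.subtypeVal.secondCountableTopology

/-- Exponent-sum homomorphism into `Fin r → Multiplicative ℤ`. -/
noncomputable def expHom (r : ℕ) : FreeGroup (Fin r) →* (Fin r → Multiplicative ℤ) :=
  FreeGroup.lift (fun k => Pi.mulSingle k (Multiplicative.ofAdd 1))

theorem exists_expHom_ne {r : ℕ} (w : FreeGroup (Fin r))
    (h : w ∉ commutator (FreeGroup (Fin r))) : ∃ k, expHom r w k ≠ 1 := by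
  by_contra hc
  push_neg at hc
  apply h
  have habs : Abelianization.of w = 1 := by
    classical
    let ψ : (Fin r → Multiplicative ℤ) →* Abelianization (FreeGroup (Fin r)) :=
      ∏ k : Fin r, (zpowersHom _ (Abelianization.of (FreeGroup.of k))).comp
        (Pi.evalMonoidHom (fun _ => Multiplicative ℤ) k)
    have key : ψ.comp (expHom r) = Abelianization.of := by
      apply FreeGroup.ext_hom
      intro j
      simp only [MonoidHom.comp_apply, expHom, FreeGroup.lift_apply_of, ψ]
      rw [MonoidHom.finset_prod_apply, Finset.prod_eq_single j]
      · simp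
      · intro k _ hk
        simp [Pi.mulSingle_apply, hk.symm]
      · simp
    have h2 : ψ (expHom r w) = Abelianization.of w := DFunLike.congr_fun key w
    rw [← h2]
    have h3 : expHom r w = 1 := funext hc
    rw [h3, map_one]
  rwa [← QuotientGroup.eq_one_iff w]

/-- Determinant as a homomorphism `U(n) →* ℂˣ`. -/
noncomputable def detHom (n : ℕ) : Matrix.unitaryGroup (Fin n) ℂ →* ℂˣ :=
  (Units.map (Matrix.detMonoidHom)).comp Unitary.toUnits

theorem detHom_val (n : ℕ) (u : Matrix.unitaryGroup (Fin n) ℂ) :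
    ((detHom n u : ℂˣ) : ℂ) = (u : Matrix (Fin n) (Fin n) ℂ).det := rfl

theorem continuous_inv_unitary (n : ℕ) :
    Continuous (fun u : Matrix.unitaryGroup (Fin n) ℂ => u⁻¹) := by
  rw [← Unitary.star_eq_inv']
  exact (continuous_star.comp continuous_subtype_val).subtype_mk _

theorem continuous_wordMap {r : ℕ} (n : ℕ) (w : FreeGroup (Fin r)) :
    Continuous (fun A : Fin r → Matrix.unitaryGroup (Fin n) ℂ =>
      (FreeGroup.lift A w : Matrix.unitaryGroup (Fin n) ℂ)) := by
  induction w using FreeGroup.induction_on with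
  | C1 => simpa using (continuous_const :
      Continuous (fun _ : Fin r → Matrix.unitaryGroup (Fin n) ℂ =>
        (1 : Matrix.unitaryGroup (Fin n) ℂ)))
  | of x =>
      have : (fun A : Fin r → Matrix.unitaryGroup (Fin n) ℂ =>
          (FreeGroup.lift A (FreeGroup.of x) : Matrix.unitaryGroup (Fin n) ℂ)) = fun A => A x := by
        funext A; exact FreeGroup.lift_apply_of
      rw [this]; exact continuous_apply x
  | inv_of x _ =>
      have : (fun A : Fin r → Matrix.unitaryGroup (Fin n) ℂ =>
          (FreeGroup.lift A (FreeGroup.of x)⁻¹ : Matrix.unitaryGroup (Fin n) ℂ)) =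
          fun A => (A x)⁻¹ := by
        funext A; rw [map_inv]; exact congrArg _ FreeGroup.lift_apply_of
      rw [this]
      exact (continuous_inv_unitary n).comp (continuous_apply x)
  | mul x y hx hy =>
      simp only [map_mul]
      exact hx.mul hy
/-- If `w₁` is in the commutator subgroup and `w₂` is not, then for all sufficiently
large `n` the two induced word measures on `U(n)` are different. -/
theorem wordMeasure_ne_of_commutator_not_commutator (r : ℕ) (hr : 1 ≤ r)
    (w₁ w₂ : FreeGroup (Fin r))
    (h₁ : w₁ ∈ commutator (FreeGroup (Fin r)))
    (h₂ : w₂ ∉ commutator (FreeGroup (Fin r))) :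
    ∃ N : ℕ, ∀ n : ℕ, N ≤ n →
      ∀ (μ : Measure (Matrix.unitaryGroup (Fin n) ℂ)) [μ.IsHaarMeasure]
        [IsProbabilityMeasure μ],
        Measure.map (fun A : Fin r → Matrix.unitaryGroup (Fin n) ℂ => FreeGroup.lift A w₁)
            (Measure.pi fun _ : Fin r => μ) ≠
        Measure.map (fun A : Fin r → Matrix.unitaryGroup (Fin n) ℂ => FreeGroup.lift A w₂)
            (Measure.pi fun _ : Fin r => μ) := by
  classical
  refine ⟨1, fun n hn μ _ _ hmeq => ?_⟩
  obtain ⟨k, hk⟩ := exists_expHom_ne w₂ h₂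
  set m : ℤ := Multiplicative.toAdd (expHom r w₂ k) with hm
  have hm0 : m ≠ 0 := by
    intro h
    apply hk
    have : Multiplicative.toAdd (expHom r w₂ k) = Multiplicative.toAdd (1 : Multiplicative ℤ) := by
      rw [toAdd_one]; exact h
    exact Multiplicative.toAdd.injective this
  set M : ℤ := (n : ℤ) * m with hMdef
  have hM0 : M ≠ 0 := mul_ne_zero (by exact_mod_cast (Nat.pos_of_ne_zero (by omega)).ne') hm0
  set c : ℂ := Complex.exp ((Real.pi / (M : ℝ)) * Complex.I) with hc
  have hcstar : (starRingEnd ℂ) c * c = 1 := by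
    rw [hc, ← Complex.exp_conj, ← Complex.exp_add]
    have : (starRingEnd ℂ) (((Real.pi / (M : ℝ)) : ℂ) * Complex.I) +
        ((Real.pi / (M : ℝ)) : ℂ) * Complex.I = 0 := by
      rw [map_mul, map_div₀, Complex.conj_ofReal, Complex.conj_ofReal, Complex.conj_I]
      ring
    rw [this, Complex.exp_zero]
  have hcM : c ^ M = -1 := by
    rw [hc, ← Complex.exp_int_mul]
    have hMne : (M : ℂ) ≠ 0 := by exact_mod_cast hM0
    have : (M : ℂ) * (((Real.pi / (M : ℝ)) : ℂ) * Complex.I) = Real.pi * Complex.I := by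
      push_cast
      field_simp
    rw [this, Complex.exp_pi_mul_I]
  have hc0 : c ≠ 0 := Complex.exp_ne_zero _
  set cu : ℂˣ := Units.mk0 c hc0 with hcu
  have hzmem : c • (1 : Matrix (Fin n) (Fin n) ℂ) ∈ Matrix.unitaryGroup (Fin n) ℂ := by
    rw [Matrix.mem_unitaryGroup_iff]
    rw [star_smul, star_one]
    rw [Matrix.smul_mul, Matrix.mul_smul, smul_smul, Matrix.one_mul]
    rw [mul_comm, Complex.star_def, hcstar, one_smul]
  set z : Matrix.unitaryGroup (Fin n) ℂ := ⟨c • 1, hzmem⟩ with hz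
  have hdetz : detHom n z = cu ^ n := by
    ext
    rw [detHom_val]
    show (c • (1 : Matrix (Fin n) (Fin n) ℂ)).det = ((cu ^ n : ℂˣ) : ℂ)
    rw [Matrix.det_smul, Matrix.det_one, Units.val_pow_eq_pow_val]
    simp [hcu]
  set u : Fin r → Matrix.unitaryGroup (Fin n) ℂ := fun j => if j = k then z else 1 with hu
  set T : (Fin r → Matrix.unitaryGroup (Fin n) ℂ) → (Fin r → Matrix.unitaryGroup (Fin n) ℂ) :=
    fun A j => u j * A j with hT
  have hkey : ∀ A : Fin r → Matrix.unitaryGroup (Fin n) ℂ,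
      (detHom n).comp (FreeGroup.lift (T A)) =
      ((zpowersHom ℂˣ (cu ^ n)).comp
        ((Pi.evalMonoidHom (fun _ : Fin r => Multiplicative ℤ) k).comp (expHom r))) *
      ((detHom n).comp (FreeGroup.lift A)) := by
    intro A
    apply FreeGroup.ext_hom
    intro j
    simp only [MonoidHom.comp_apply, MonoidHom.mul_apply, FreeGroup.lift_apply_of, expHom,
      Pi.evalMonoidHom_apply, zpowersHom_apply, hT, map_mul]
    by_cases hj : j = k
    · subst hj
      simp [hu, hdetz]
    · simp [hu, hj, Pi.mulSingle_apply, hj]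
  have hpoint : ∀ A : Fin r → Matrix.unitaryGroup (Fin n) ℂ,
      ((detHom n (FreeGroup.lift (T A) w₂) : ℂˣ) : ℂ) =
      (-1) * ((detHom n (FreeGroup.lift A w₂) : ℂˣ) : ℂ) := by
    intro A
    have h := DFunLike.congr_fun (hkey A) w₂
    simp only [MonoidHom.comp_apply, MonoidHom.mul_apply, Pi.evalMonoidHom_apply,
      zpowersHom_apply] at h
    have hcM' : (((cu ^ n) ^ m : ℂˣ) : ℂ) = -1 := by
      rw [Units.val_zpow_eq_zpow_val, Units.val_pow_eq_pow_val]
      have : ((cu : ℂ) ^ n) ^ m = c ^ M := by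
        rw [hMdef, ← zpow_natCast (cu : ℂ) n, ← zpow_mul]
        simp [hcu]
      rw [this, hcM]
    calc ((detHom n (FreeGroup.lift (T A) w₂) : ℂˣ) : ℂ)
        = (((cu ^ n) ^ m * detHom n (FreeGroup.lift A w₂) : ℂˣ) : ℂ) := by rw [h]
      _ = (-1) * ((detHom n (FreeGroup.lift A w₂) : ℂˣ) : ℂ) := by
          rw [Units.val_mul, hcM']
  set π : Measure (Fin r → Matrix.unitaryGroup (Fin n) ℂ) := Measure.pi fun _ => μ with hπ
  have hTmp : MeasurePreserving T π π :=
    measurePreserving_pi _ _ (fun j => measurePreserving_mul_left μ (u j))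
  set g : Matrix.unitaryGroup (Fin n) ℂ → ℂ := fun x => ((detHom n x : ℂˣ) : ℂ) with hg
  have hgc : Continuous g := by
    have : g = fun x : Matrix.unitaryGroup (Fin n) ℂ => (x : Matrix (Fin n) (Fin n) ℂ).det :=
      funext (detHom_val n)
    rw [this]
    exact continuous_subtype_val.matrix_det
  have hmw : ∀ w : FreeGroup (Fin r),
      Measurable (fun A : Fin r → Matrix.unitaryGroup (Fin n) ℂ =>
        (FreeGroup.lift A w : Matrix.unitaryGroup (Fin n) ℂ)) :=
    fun w => (continuous_wordMap n w).measurable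
  have hint : ∫ A, g (FreeGroup.lift A w₁) ∂π = ∫ A, g (FreeGroup.lift A w₂) ∂π := by
    rw [← integral_map (hmw w₁).aemeasurable hgc.aestronglyMeasurable,
      ← integral_map (hmw w₂).aemeasurable hgc.aestronglyMeasurable, hmeq]
  have hleft : ∫ A, g (FreeGroup.lift A w₁) ∂π = 1 := by
    have h1 : ∀ A : Fin r → Matrix.unitaryGroup (Fin n) ℂ, g (FreeGroup.lift A w₁) = 1 := by
      intro A
      have := Abelianization.commutator_subset_ker ((detHom n).comp (FreeGroup.lift A)) h₁
      have h2 : (detHom n) (FreeGroup.lift A w₁) = 1 := this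
      rw [hg]
      simp only [h2, Units.val_one]
    simp_rw [h1]
    simp
  have hright : ∫ A, g (FreeGroup.lift A w₂) ∂π = 0 := by
    set I : ℂ := ∫ A, g (FreeGroup.lift A w₂) ∂π with hI
    have hcomp : ∫ A, g (FreeGroup.lift (T A) w₂) ∂π = I := by
      have hasm : AEStronglyMeasurable
          (fun A : Fin r → Matrix.unitaryGroup (Fin n) ℂ => g (FreeGroup.lift A w₂))
          (Measure.map T π) := by
        rw [hTmp.map_eq]
        exact (hgc.comp (continuous_wordMap n w₂)).aestronglyMeasurable
      have := integral_map hTmp.aemeasurable hasm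
      rw [hTmp.map_eq] at this
      exact this.symm
    have hneg : ∫ A, g (FreeGroup.lift (T A) w₂) ∂π = -I := by
      have : (fun A : Fin r → Matrix.unitaryGroup (Fin n) ℂ => g (FreeGroup.lift (T A) w₂)) =
          fun A => -(g (FreeGroup.lift A w₂)) := by
        funext A
        simp only [hg]
        rw [hpoint A]
        ring
      rw [this, integral_neg]
    have : I = -I := hcomp.symm.trans hneg
    have hI0 : I = 0 := by linear_combination this / 2
    exact hI0
  rw [hleft, hright] at hint
  exact one_ne_zero hint
end

section
/- Let C be a nonempty finite linearly ordered type. Let P_C = {(i,j) ∈ C × C : i ≤ j}, partially ordered by (i₁,j₁) ≼ (i₂,j₂) iff i₂ ≤ i₁ and j₁ ≤ j₂. Let |P_C| ⊆ stdSimplex(ℝ, P_C) be the geometric realization of the order complex of P_C, i.e. the set of points of the standard simplex on the vertex set P_C whose support is a chain with respect to ≼. Then the map F : |P_C| → stdSimplex(ℝ, C) defined by F(x)(c) = ½ Σ_{(i,j) ∈ P_C, i = c} x(i,j) + ½ Σ_{(i,j) ∈ P_C, j = c} x(i,j) is a homeomorphism from |P_C| onto the full standard simplex stdSimplex(ℝ,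 C); in particular F is a continuous bijection onto stdSimplex(ℝ, C). -/
open Finset

variable {C : Type*} [Fintype C] [LinearOrder C]

/-- The poset `P_C` of pairs `(i,j)` with `i ≤ j` in a linear order `C`. -/
def pairPoset (C : Type*) [LinearOrder C] : Type _ := {p : C × C // p.1 ≤ p.2}

/-- The partial order on `P_C`: `(i₁,j₁) ≼ (i₂,j₂)` iff `i₂ ≤ i₁` and `j₁ ≤ j₂`. -/
def pairLE (a b : pairPoset C) : Prop :=
  b.val.1 ≤ a.val.1 ∧ a.val.2 ≤ b.val.2

noncomputable instance : Fintype (pairPoset C) := by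
  unfold pairPoset; infer_instance

/-- The geometric realization of the order complex of `P_C`: the points of the standard
simplex on the vertex set `P_C` whose support is a chain for `≼`. -/
def pairRealization (C : Type*) [Fintype C] [LinearOrder C] :
    Set (pairPoset C → ℝ) :=
  {x | x ∈ stdSimplex ℝ (pairPoset C) ∧ IsChain pairLE (Function.support x)}

instance : DecidableEq (pairPoset C) :=
  fun a b => decidable_of_iff _ Subtype.ext_iff.symm

namespace PairSub

theorem minIE (a a' b b' : ℝ) (ha : a' ≤ a) (hb : b' ≤ b) :
    min a b - min a' b - min a b' + min a' b' = max (min a b - max a' b') 0 := by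
  rcases le_total a b <;> rcases le_total a' b' <;> rcases le_total a b' <;> rcases le_total a' b <;>
    simp_all [min_def, max_def] <;> first | linarith | (split_ifs <;> linarith)

theorem teleR (φ : ℝ → ℝ) (y : C → ℝ) (s : Finset C) :
    ∑ j ∈ s, (φ (∑ c ∈ s.filter (fun c => j ≤ c), y c) - φ (∑ c ∈ s.filter (fun c => j < c), y c))
      = φ (∑ c ∈ s, y c) - φ 0 := by
  induction s using Finset.induction_on_min with
  | empty => simp
  | insert m s' hm ih =>
      have hms : m ∉ s' := fun h => lt_irrefl m (hm m h)
      rw [Finset.sum_insert hms]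
      have h1 : (insert m s').filter (fun c => m ≤ c) = insert m s' := by
        apply Finset.filter_true_of_mem
        intro c hc
        rcases Finset.mem_insert.mp hc with h | h
        · exact le_of_eq h.symm
        · exact (hm c h).le
      have h2 : (insert m s').filter (fun c => m < c) = s' := by
        ext c
        simp only [Finset.mem_filter, Finset.mem_insert]
        constructor
        · rintro ⟨h | h, hlt⟩
          · exact absurd hlt (by simp [h])
          · exact h
        · exact fun h => ⟨Or.inr h, hm c h⟩
      rw [h1, h2]
      have h3 : ∀ j ∈ s',
          (φ (∑ c ∈ (insert m s').filter (fun c => j ≤ c), y c) -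
            φ (∑ c ∈ (insert m s').filter (fun c => j < c), y c)) =
          (φ (∑ c ∈ s'.filter (fun c => j ≤ c), y c) -
            φ (∑ c ∈ s'.filter (fun c => j < c), y c)) := by
        intro j hj
        have hmj : m < j := hm j hj
        have e1 : (insert m s').filter (fun c => j ≤ c) = s'.filter (fun c => j ≤ c) := by
          rw [Finset.filter_insert, if_neg (not_le.mpr hmj)]
        have e2 : (insert m s').filter (fun c => j < c) = s'.filter (fun c => j < c) := by
          rw [Finset.filter_insert, if_neg (fun h => absurd (hmj.trans h) (lt_irrefl m))]
        rw [e1, e2]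
      rw [Finset.sum_congr rfl h3, ih, Finset.sum_insert hms]
      ring

theorem teleL (φ : ℝ → ℝ) (y : C → ℝ) (s : Finset C) :
    ∑ j ∈ s, (φ (∑ c ∈ s.filter (fun c => c ≤ j), y c) - φ (∑ c ∈ s.filter (fun c => c < j), y c))
      = φ (∑ c ∈ s, y c) - φ 0 := by
  induction s using Finset.induction_on_max with
  | empty => simp
  | insert m s' hm ih =>
      have hms : m ∉ s' := fun h => lt_irrefl m (hm m h)
      rw [Finset.sum_insert hms]
      have h1 : (insert m s').filter (fun c => c ≤ m) = insert m s' := by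
        apply Finset.filter_true_of_mem
        intro c hc
        rcases Finset.mem_insert.mp hc with h | h
        · exact le_of_eq h
        · exact (hm c h).le
      have h2 : (insert m s').filter (fun c => c < m) = s' := by
        ext c
        simp only [Finset.mem_filter, Finset.mem_insert]
        constructor
        · rintro ⟨h | h, hlt⟩
          · exact absurd hlt (by simp [h])
          · exact h
        · exact fun h => ⟨Or.inr h, hm c h⟩
      rw [h1, h2]
      have h3 : ∀ j ∈ s',
          (φ (∑ c ∈ (insert m s').filter (fun c => c ≤ j), y c) -
            φ (∑ c ∈ (insert m s').filter (fun c => c < j), y c)) =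
          (φ (∑ c ∈ s'.filter (fun c => c ≤ j), y c) -
            φ (∑ c ∈ s'.filter (fun c => c < j), y c)) := by
        intro j hj
        have hmj : j < m := hm j hj
        have e1 : (insert m s').filter (fun c => c ≤ j) = s'.filter (fun c => c ≤ j) := by
          rw [Finset.filter_insert, if_neg (not_le.mpr hmj)]
        have e2 : (insert m s').filter (fun c => c < j) = s'.filter (fun c => c < j) := by
          rw [Finset.filter_insert, if_neg (fun h => absurd (h.trans hmj) (lt_irrefl m))]
        rw [e1, e2]
      rw [Finset.sum_congr rfl h3, ih, Finset.sum_insert hms]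
      ring

noncomputable def SA (y : C → ℝ) (i : C) : ℝ := min (2 * ∑ c ∈ univ.filter (fun c => c ≤ i), y c) 1
noncomputable def SA' (y : C → ℝ) (i : C) : ℝ := min (2 * ∑ c ∈ univ.filter (fun c => c < i), y c) 1
noncomputable def SB (y : C → ℝ) (j : C) : ℝ := min (2 * ∑ c ∈ univ.filter (fun c => j ≤ c), y c) 1
noncomputable def SB' (y : C → ℝ) (j : C) : ℝ := min (2 * ∑ c ∈ univ.filter (fun c => j < c), y c) 1
noncomputable def Gmap (y : C → ℝ) (p : C × C) : ℝ :=
  min (SA y p.1) (SB y p.2) - min (SA' y p.1) (SB y p.2)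
    - min (SA y p.1) (SB' y p.2) + min (SA' y p.1) (SB' y p.2)

theorem sum_mono_filter (y : C → ℝ) (hy0 : ∀ c, 0 ≤ y c) (p q : C → Prop)
    [DecidablePred p] [DecidablePred q] (h : ∀ c, p c → q c) :
    ∑ c ∈ univ.filter p, y c ≤ ∑ c ∈ univ.filter q, y c := by
  apply Finset.sum_le_sum_of_subset_of_nonneg
  · intro c hc
    simp only [Finset.mem_filter, Finset.mem_univ, true_and] at *
    exact h c hc
  · exact fun c _ _ => hy0 c

theorem sum_filter_nonneg (y : C → ℝ) (hy0 : ∀ c, 0 ≤ y c) (p : C → Prop) [DecidablePred p] :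
    0 ≤ ∑ c ∈ univ.filter p, y c :=
  Finset.sum_nonneg fun c _ => hy0 c

theorem SA'_le_SA (y : C → ℝ) (hy0 : ∀ c, 0 ≤ y c) (i : C) : SA' y i ≤ SA y i := by
  apply min_le_min _ le_rfl
  have := sum_mono_filter y hy0 (fun c => c < i) (fun c => c ≤ i) (fun c hc => le_of_lt hc)
  linarith

theorem SB'_le_SB (y : C → ℝ) (hy0 : ∀ c, 0 ≤ y c) (j : C) : SB' y j ≤ SB y j := by
  apply min_le_min _ le_rfl
  have := sum_mono_filter y hy0 (fun c => j < c) (fun c => j ≤ c) (fun c hc => le_of_lt hc)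
  linarith

theorem SA_nonneg (y : C → ℝ) (hy0 : ∀ c, 0 ≤ y c) (i : C) : 0 ≤ SA y i :=
  le_min (by have := sum_filter_nonneg y hy0 (fun c => c ≤ i); linarith) zero_le_one
theorem SA'_nonneg (y : C → ℝ) (hy0 : ∀ c, 0 ≤ y c) (i : C) : 0 ≤ SA' y i :=
  le_min (by have := sum_filter_nonneg y hy0 (fun c => c < i); linarith) zero_le_one
theorem SB_nonneg (y : C → ℝ) (hy0 : ∀ c, 0 ≤ y c) (j : C) : 0 ≤ SB y j :=
  le_min (by have := sum_filter_nonneg y hy0 (fun c => j ≤ c); linarith) zero_le_one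
theorem SB'_nonneg (y : C → ℝ) (hy0 : ∀ c, 0 ≤ y c) (j : C) : 0 ≤ SB' y j :=
  le_min (by have := sum_filter_nonneg y hy0 (fun c => j < c); linarith) zero_le_one
theorem SA_le_one (y : C → ℝ) (i : C) : SA y i ≤ 1 := min_le_right _ _
theorem SA'_le_one (y : C → ℝ) (i : C) : SA' y i ≤ 1 := min_le_right _ _
theorem SB_le_one (y : C → ℝ) (j : C) : SB y j ≤ 1 := min_le_right _ _
theorem SB'_le_one (y : C → ℝ) (j : C) : SB' y j ≤ 1 := min_le_right _ _

theorem Gmap_eq_max (y : C → ℝ) (hy0 : ∀ c, 0 ≤ y c) (p : C × C) :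
    Gmap y p = max (min (SA y p.1) (SB y p.2) - max (SA' y p.1) (SB' y p.2)) 0 :=
  minIE _ _ _ _ (SA'_le_SA y hy0 p.1) (SB'_le_SB y hy0 p.2)

theorem Gmap_nonneg (y : C → ℝ) (hy0 : ∀ c, 0 ≤ y c) (p : C × C) : 0 ≤ Gmap y p := by
  rw [Gmap_eq_max y hy0]; exact le_max_right _ _

theorem Gmap_pos_of_ne (y : C → ℝ) (hy0 : ∀ c, 0 ≤ y c) (p : C × C) (h : Gmap y p ≠ 0) :
    max (SA' y p.1) (SB' y p.2) < min (SA y p.1) (SB y p.2) := by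
  rw [Gmap_eq_max y hy0] at h
  rcases le_or_gt (min (SA y p.1) (SB y p.2)) (max (SA' y p.1) (SB' y p.2)) with hle | hlt
  · exact absurd (max_eq_right (by linarith)) h
  · exact hlt

theorem Gmap_eq_zero_of_lt (y : C → ℝ) (hy0 : ∀ c, 0 ≤ y c) (hy1 : ∑ c, y c = 1)
    (p : C × C) (hp : p.2 < p.1) : Gmap y p = 0 := by
  rw [Gmap_eq_max y hy0]
  apply max_eq_right
  have hcover : (univ.filter (fun c => c < p.1)) ∪ (univ.filter (fun c => p.2 < c)) = univ := by
    ext c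
    simp only [Finset.mem_union, Finset.mem_filter, Finset.mem_univ, true_and]
    rcases lt_or_ge c p.1 with h | h
    · exact ⟨fun _ => trivial, fun _ => Or.inl h⟩
    · exact ⟨fun _ => trivial, fun _ => Or.inr (lt_of_lt_of_le hp h)⟩
  have hsum : (1:ℝ) ≤ ∑ c ∈ univ.filter (fun c => c < p.1), y c
      + ∑ c ∈ univ.filter (fun c => p.2 < c), y c := by
    have h5 := Finset.sum_union_inter (s₁ := univ.filter (fun c => c < p.1))
      (s₂ := univ.filter (fun c => p.2 < c)) (f := y)
    rw [hcover, hy1] at h5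
    have hnn : 0 ≤ ∑ c ∈ (univ.filter (fun c => c < p.1)) ∩ (univ.filter (fun c => p.2 < c)), y c :=
      Finset.sum_nonneg fun c _ => hy0 c
    linarith
  rcases le_or_gt 1 (2 * ∑ c ∈ univ.filter (fun c => c < p.1), y c) with h | h
  · have h1 : SA' y p.1 = 1 := min_eq_right h
    have h2 : min (SA y p.1) (SB y p.2) ≤ 1 :=
      le_trans (min_le_left _ _) (SA_le_one y p.1)
    linarith [le_max_left (SA' y p.1) (SB' y p.2)]
  · have h1 : SB' y p.2 = 1 := min_eq_right (by linarith)
    have h2 : min (SA y p.1) (SB y p.2) ≤ 1 :=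
      le_trans (min_le_right _ _) (SB_le_one y p.2)
    linarith [le_max_right (SA' y p.1) (SB' y p.2)]

theorem SA_le_SA' (y : C → ℝ) (hy0 : ∀ c, 0 ≤ y c) (i1 i2 : C) (h : i1 < i2) :
    SA y i1 ≤ SA' y i2 := by
  apply min_le_min _ le_rfl
  have := sum_mono_filter y hy0 (fun c => c ≤ i1) (fun c => c < i2)
    (fun c hc => lt_of_le_of_lt hc h)
  linarith

theorem SB_le_SB' (y : C → ℝ) (hy0 : ∀ c, 0 ≤ y c) (j1 j2 : C) (h : j1 < j2) :
    SB y j2 ≤ SB' y j1 := by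
  apply min_le_min _ le_rfl
  have := sum_mono_filter y hy0 (fun c => j2 ≤ c) (fun c => j1 < c)
    (fun c hc => lt_of_lt_of_le h hc)
  linarith

theorem Gmap_support_nested (y : C → ℝ) (hy0 : ∀ c, 0 ≤ y c) (p q : C × C)
    (hp : Gmap y p ≠ 0) (hq : Gmap y q ≠ 0)
    (h1 : p.1 < q.1) (h2 : p.2 < q.2) : False := by
  have Hp := Gmap_pos_of_ne y hy0 p hp
  have Hq := Gmap_pos_of_ne y hy0 q hq
  have hA : SA y p.1 ≤ SA' y q.1 := SA_le_SA' y hy0 _ _ h1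
  have hB : SB y q.2 ≤ SB' y p.2 := SB_le_SB' y hy0 _ _ h2
  have c1 : SA' y q.1 < SB y q.2 :=
    lt_of_le_of_lt (le_max_left _ _) (lt_of_lt_of_le Hq (min_le_right _ _))
  have c2 : SB' y p.2 < SA y p.1 :=
    lt_of_le_of_lt (le_max_right _ _) (lt_of_lt_of_le Hp (min_le_left _ _))
  linarith

/-- sums over the pair poset as sums over the product -/
theorem sum_pairPoset (f : C × C → ℝ) :
    ∑ p : pairPoset C, f p.val
      = ∑ p ∈ univ.filter (fun p : C × C => p.1 ≤ p.2), f p :=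
  (Finset.sum_subtype _ (by simp) f).symm

theorem sum_pair_eq_univ (f : C × C → ℝ) (hf : ∀ p : C × C, p.2 < p.1 → f p = 0) :
    ∑ p ∈ univ.filter (fun p : C × C => p.1 ≤ p.2), f p = ∑ p : C × C, f p := by
  apply Finset.sum_subset (Finset.filter_subset _ _)
  intro p _ hp
  simp only [Finset.mem_filter, Finset.mem_univ, true_and, not_le] at hp
  exact hf p hp

theorem sumG_right (y : C → ℝ) (hy1 : ∑ c, y c = 1) (t : ℝ) (ht0 : 0 ≤ t) (ht1 : t ≤ 1) :
    ∑ j : C, (min t (SB y j) - min t (SB' y j)) = t := by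
  have h := teleR (fun z => min t (min (2*z) 1)) y univ
  simp only [SB, SB']
  rw [hy1] at h
  convert h using 2 <;> norm_num
  rw [min_eq_left ht1, min_eq_right ht0, sub_zero]

theorem sumG_left (y : C → ℝ) (hy1 : ∑ c, y c = 1) (t : ℝ) (ht0 : 0 ≤ t) (ht1 : t ≤ 1) :
    ∑ i : C, (min (SA y i) t - min (SA' y i) t) = t := by
  have h := teleL (fun z => min (min (2*z) 1) t) y univ
  simp only [SA, SA']
  rw [hy1] at h
  convert h using 2 <;> norm_num
  rw [min_eq_right ht1, min_eq_left ht0, sub_zero]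

theorem Grow (y : C → ℝ) (hy0 : ∀ c, 0 ≤ y c) (hy1 : ∑ c, y c = 1) (c : C) :
    ∑ j : C, Gmap y (c, j) = SA y c - SA' y c := by
  have key : ∀ j : C, Gmap y (c, j) =
      (min (SA y c) (SB y j) - min (SA y c) (SB' y j))
        - (min (SA' y c) (SB y j) - min (SA' y c) (SB' y j)) := by
    intro j; simp only [Gmap]; ring
  rw [Finset.sum_congr rfl (fun j _ => key j), Finset.sum_sub_distrib]
  have e1 : ∀ t, min t (SA y c) = min (SA y c) t := fun t => min_comm _ _
  rw [sumG_right y hy1 (SA y c) (SA_nonneg y hy0 c) (min_le_right _ _),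
      sumG_right y hy1 (SA' y c) (SA'_nonneg y hy0 c) (min_le_right _ _)]

theorem Gcol (y : C → ℝ) (hy0 : ∀ c, 0 ≤ y c) (hy1 : ∑ c, y c = 1) (c : C) :
    ∑ i : C, Gmap y (i, c) = SB y c - SB' y c := by
  have key : ∀ i : C, Gmap y (i, c) =
      (min (SA y i) (SB y c) - min (SA' y i) (SB y c))
        - (min (SA y i) (SB' y c) - min (SA' y i) (SB' y c)) := by
    intro i; simp only [Gmap]; ring
  rw [Finset.sum_congr rfl (fun i _ => key i), Finset.sum_sub_distrib,
      sumG_left y hy1 (SB y c) (SB_nonneg y hy0 c) (min_le_right _ _),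
      sumG_left y hy1 (SB' y c) (SB'_nonneg y hy0 c) (min_le_right _ _)]

theorem Gtotal (y : C → ℝ) (hy0 : ∀ c, 0 ≤ y c) (hy1 : ∑ c, y c = 1) :
    ∑ p : C × C, Gmap y p = 1 := by
  rw [Fintype.sum_prod_type]
  have : ∀ i : C, ∑ j : C, Gmap y (i, j) = SA y i - SA' y i := Grow y hy0 hy1
  rw [Finset.sum_congr rfl (fun i _ => this i)]
  have h := teleL (fun z => min (2*z) 1) y univ
  rw [hy1] at h
  simp only [SA, SA']
  convert h using 2 <;> norm_num

/-- the forward map -/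
noncomputable def Fmap (x : pairPoset C → ℝ) (c : C) : ℝ :=
  (∑ p : pairPoset C, if p.val.1 = c then x p else 0) / 2 +
  (∑ p : pairPoset C, if p.val.2 = c then x p else 0) / 2

/-- splitting the sum at c (left version) -/
theorem sum_split_left (y : C → ℝ) (c : C) :
    ∑ c' ∈ univ.filter (fun c' => c' ≤ c), y c'
      = y c + ∑ c' ∈ univ.filter (fun c' => c' < c), y c' := by
  have h : univ.filter (fun c' => c' ≤ c) = insert c (univ.filter (fun c' => c' < c)) := by
    ext c'
    simp only [Finset.mem_filter, Finset.mem_univ, true_and, Finset.mem_insert]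
    constructor
    · intro hle
      rcases eq_or_lt_of_le hle with h' | h'
      · exact Or.inl h'
      · exact Or.inr h'
    · rintro (h' | h')
      · exact le_of_eq h'
      · exact le_of_lt h'
  rw [h, Finset.sum_insert (by simp)]

theorem sum_split_right (y : C → ℝ) (c : C) :
    ∑ c' ∈ univ.filter (fun c' => c ≤ c'), y c'
      = y c + ∑ c' ∈ univ.filter (fun c' => c < c'), y c' := by
  have h : univ.filter (fun c' => c ≤ c') = insert c (univ.filter (fun c' => c < c')) := by
    ext c'
    simp only [Finset.mem_filter, Finset.mem_univ, true_and, Finset.mem_insert]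
    constructor
    · intro hle
      rcases eq_or_lt_of_le hle with h' | h'
      · exact Or.inl h'.symm
      · exact Or.inr h'
    · rintro (h' | h')
      · exact le_of_eq h'.symm
      · exact le_of_lt h'
  rw [h, Finset.sum_insert (by simp)]

theorem sum_split_at (y : C → ℝ) (c : C) (hy1 : ∑ c', y c' = 1) :
    (∑ c' ∈ univ.filter (fun c' => c' < c), y c')
      + (∑ c' ∈ univ.filter (fun c' => c ≤ c'), y c') = 1 := by
  rw [← hy1]
  have := Finset.sum_filter_add_sum_filter_not univ (fun c' => c' < c) y
  rw [← this]
  congr 1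
  apply Finset.sum_congr _ (fun _ _ => rfl)
  apply Finset.filter_congr
  intro c' _
  simp [not_lt]

/-- the key real-number identity -/
theorem four_min_id (s' u' v : ℝ) (h0 : 0 ≤ v) (hs' : 0 ≤ s') (hu' : 0 ≤ u')
    (hsum : s' + (u' + v) = 1) :
    (min (2*(v + s')) 1 - min (2*s') 1) + (min (2*(v + u')) 1 - min (2*u') 1) = 2*v := by
  rcases le_total (2*(v + s')) 1 with h1 | h1 <;> rcases le_total (2*s') 1 with h2 | h2 <;>
    rcases le_total (2*(v + u')) 1 with h3 | h3 <;> rcases le_total (2*u') 1 with h4 | h4 <;>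
    simp [min_def] <;> split_ifs <;> linarith

theorem FGmap (y : C → ℝ) (hy0 : ∀ c, 0 ≤ y c) (hy1 : ∑ c, y c = 1) (c : C) :
    Fmap (fun p : pairPoset C => Gmap y p.val) c = y c := by
  have hzero : ∀ p : C × C, p.2 < p.1 → Gmap y p = 0 := Gmap_eq_zero_of_lt y hy0 hy1
  have h1 : (∑ p : pairPoset C, if p.val.1 = c then Gmap y p.val else 0)
      = SA y c - SA' y c := by
    rw [sum_pairPoset (fun p => if p.1 = c then Gmap y p else 0),
        sum_pair_eq_univ _ (fun p hp => by split_ifs <;> simp [hzero p hp]),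
        Fintype.sum_prod_type]
    have : ∀ i : C, (∑ j : C, if i = c then Gmap y (i, j) else 0)
        = if i = c then SA y c - SA' y c else 0 := by
      intro i
      split_ifs with h
      · subst h; exact Grow y hy0 hy1 i
      · simp
    rw [Finset.sum_congr rfl (fun i _ => this i), Finset.sum_ite_eq' univ c
      (fun _ => SA y c - SA' y c)]
    simp
  have h2 : (∑ p : pairPoset C, if p.val.2 = c then Gmap y p.val else 0)
      = SB y c - SB' y c := by
    rw [sum_pairPoset (fun p => if p.2 = c then Gmap y p else 0),
        sum_pair_eq_univ _ (fun p hp => by split_ifs <;> simp [hzero p hp]),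
        Fintype.sum_prod_type_right]
    have : ∀ j : C, (∑ i : C, if j = c then Gmap y (i, j) else 0)
        = if j = c then SB y c - SB' y c else 0 := by
      intro j
      split_ifs with h
      · subst h; exact Gcol y hy0 hy1 j
      · simp
    rw [Finset.sum_congr rfl (fun j _ => this j), Finset.sum_ite_eq' univ c
      (fun _ => SB y c - SB' y c)]
    simp
  rw [Fmap, h1, h2]
  have e1 := sum_split_left y c
  have e2 := sum_split_right y c
  have e3 := sum_split_at y c hy1
  have := four_min_id (∑ c' ∈ univ.filter (fun c' => c' < c), y c')
    (∑ c' ∈ univ.filter (fun c' => c < c'), y c') (y c) (hy0 c)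
    (Finset.sum_nonneg (fun c' _ => hy0 c')) (Finset.sum_nonneg (fun c' _ => hy0 c'))
    (by linarith)
  simp only [SA, SA', SB, SB']
  rw [e1, e2]
  linarith
theorem ite_comb (A1 A2 B1 B2 E : Prop) [Decidable A1] [Decidable A2] [Decidable B1]
    [Decidable B2] [Decidable E] (t : ℝ)
    (hA : A2 → A1) (hB : B2 → B1) (hE : E ↔ (A1 ∧ ¬A2 ∧ B1 ∧ ¬B2)) :
    (if E then t else 0)
      = (if A1 ∧ B1 then t else 0) - (if A2 ∧ B1 then t else 0)
        - (if A1 ∧ B2 then t else 0) + (if A2 ∧ B2 then t else 0) := by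
  by_cases a1 : A1 <;> by_cases a2 : A2 <;> by_cases b1 : B1 <;> by_cases b2 : B2 <;>
    simp_all <;> ring

section inj
variable (x : pairPoset C → ℝ)

theorem upset_eq (hx0 : ∀ p, 0 ≤ x p) (P Q : pairPoset C → Prop)
    [DecidablePred P] [DecidablePred Q] (h : ∀ p, x p ≠ 0 → P p → Q p) :
    (∑ p : pairPoset C, if P p ∧ Q p then x p else 0)
      = ∑ p : pairPoset C, if P p then x p else 0 := by
  apply Finset.sum_congr rfl
  intro p _
  by_cases hxp : x p = 0
  · split_ifs <;> simp [hxp]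
  · by_cases hP : P p
    · simp [hP, h p hxp hP]
    · simp [hP]

theorem upset_le (hx0 : ∀ p, 0 ≤ x p) (P Q : pairPoset C → Prop)
    [DecidablePred P] [DecidablePred Q] (h : ∀ p, x p ≠ 0 → P p → Q p) :
    (∑ p : pairPoset C, if P p then x p else 0)
      ≤ ∑ p : pairPoset C, if Q p then x p else 0 := by
  apply Finset.sum_le_sum
  intro p _
  by_cases hxp : x p = 0
  · split_ifs <;> simp [hxp]
  · by_cases hP : P p
    · simp [hP, h p hxp hP]
    · rw [if_neg hP]
      by_cases hQ : Q p
      · rw [if_pos hQ]; exact hx0 p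
      · rw [if_neg hQ]

theorem sum_inter_min (hx0 : ∀ p, 0 ≤ x p) (hch : IsChain pairLE (Function.support x))
    (P Q : pairPoset C → Prop) [DecidablePred P] [DecidablePred Q]
    (hP : ∀ a b, pairLE a b → P a → P b) (hQ : ∀ a b, pairLE a b → Q a → Q b) :
    (∑ p : pairPoset C, if P p ∧ Q p then x p else 0)
      = min (∑ p : pairPoset C, if P p then x p else 0)
            (∑ p : pairPoset C, if Q p then x p else 0) := by
  have hdir : (∀ p, x p ≠ 0 → P p → Q p) ∨ (∀ p, x p ≠ 0 → Q p → P p) := by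
    by_contra hcon
    push_neg at hcon
    obtain ⟨⟨p, hxp, hPp, hQp⟩, ⟨q, hxq, hQq, hPq⟩⟩ := hcon
    have hne : p ≠ q := fun h => hPq (h ▸ hPp)
    rcases hch (Function.mem_support.mpr hxp) (Function.mem_support.mpr hxq) hne with hle | hle
    · exact hPq (hP p q hle hPp)
    · exact hQp (hQ q p hle hQq)
  rcases hdir with h | h
  · rw [upset_eq x hx0 P Q h]
    exact (min_eq_left (upset_le x hx0 P Q h)).symm
  · have e : (∑ p : pairPoset C, if P p ∧ Q p then x p else 0)
        = ∑ p : pairPoset C, if Q p ∧ P p then x p else 0 := by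
      exact Finset.sum_congr rfl fun p _ => if_congr and_comm rfl rfl
    rw [e, upset_eq x hx0 Q P h]
    exact (min_eq_right (upset_le x hx0 Q P h)).symm

theorem margL (hx0 : ∀ p, 0 ≤ x p) (hx1 : ∑ p, x p = 1)
    (hch : IsChain pairLE (Function.support x))
    (σ : C → Prop) [DecidablePred σ] (hσ : ∀ c c', c ≤ c' → σ c' → σ c) :
    (∑ p : pairPoset C, if σ p.val.1 then x p else 0)
      = min (2 * ∑ c ∈ univ.filter σ, Fmap x c) 1 := by
  have hsplit : 2 * ∑ c ∈ univ.filter σ, Fmap x c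
      = (∑ p : pairPoset C, if σ p.val.1 then x p else 0)
        + (∑ p : pairPoset C, if σ p.val.2 then x p else 0) := by
    have e1 : ∀ (g : pairPoset C → C),
        (∑ c ∈ univ.filter σ, ∑ p : pairPoset C, if g p = c then x p else 0)
          = ∑ p : pairPoset C, if σ (g p) then x p else 0 := by
      intro g
      rw [Finset.sum_comm]
      apply Finset.sum_congr rfl
      intro p _
      rw [Finset.sum_ite_eq (univ.filter σ) (g p) (fun _ => x p)]
      simp
    simp only [Fmap]
    rw [Finset.sum_add_distrib, mul_add]
    rw [← Finset.sum_div, ← Finset.sum_div]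
    rw [e1 (fun p => p.val.1), e1 (fun p => p.val.2)]
    ring
  by_cases hM : (∑ p : pairPoset C, if σ p.val.2 then x p else 0) = 0
  · rw [hsplit, hM, add_zero]
    have hle : (∑ p : pairPoset C, if σ p.val.1 then x p else 0) ≤ 1 := by
      rw [← hx1]
      apply Finset.sum_le_sum
      intro p _
      split_ifs
      · exact le_refl _
      · exact hx0 p
    exact (min_eq_left hle).symm
  · obtain ⟨p₀, _, h0⟩ := Finset.exists_ne_zero_of_sum_ne_zero hM
    have hx0' : x p₀ ≠ 0 := by intro h; rw [h] at h0; simp at h0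
    have hσ2 : σ p₀.val.2 := by by_contra h; rw [if_neg h] at h0; exact h0 rfl
    have hall : ∀ p : pairPoset C, x p ≠ 0 → σ p.val.1 := by
      intro p hxp
      by_cases hpq : p = p₀
      · subst hpq; exact hσ _ _ p.prop hσ2
      · rcases hch (Function.mem_support.mpr hxp) (Function.mem_support.mpr hx0') hpq
          with hle | hle
        · exact hσ _ _ (le_trans p.prop hle.2) hσ2
        · exact hσ _ _ (le_trans hle.1 p₀.prop) hσ2
    have hfull : (∑ p : pairPoset C, if σ p.val.1 then x p else 0) = 1 := by
      rw [← hx1]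
      apply Finset.sum_congr rfl
      intro p _
      by_cases hxp : x p = 0
      · split_ifs <;> simp [hxp]
      · rw [if_pos (hall p hxp)]
    have hMn : 0 ≤ (∑ p : pairPoset C, if σ p.val.2 then x p else 0) := by
      apply Finset.sum_nonneg
      intro p _
      by_cases h : σ p.val.2
      · rw [if_pos h]; exact hx0 p
      · rw [if_neg h]
    rw [hfull]
    rw [eq_comm]
    apply min_eq_right
    rw [hsplit, hfull]
    linarith

theorem margR (hx0 : ∀ p, 0 ≤ x p) (hx1 : ∑ p, x p = 1)
    (hch : IsChain pairLE (Function.support x))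
    (σ : C → Prop) [DecidablePred σ] (hσ : ∀ c c', c ≤ c' → σ c → σ c') :
    (∑ p : pairPoset C, if σ p.val.2 then x p else 0)
      = min (2 * ∑ c ∈ univ.filter σ, Fmap x c) 1 := by
  have hsplit : 2 * ∑ c ∈ univ.filter σ, Fmap x c
      = (∑ p : pairPoset C, if σ p.val.1 then x p else 0)
        + (∑ p : pairPoset C, if σ p.val.2 then x p else 0) := by
    have e1 : ∀ (g : pairPoset C → C),
        (∑ c ∈ univ.filter σ, ∑ p : pairPoset C, if g p = c then x p else 0)
          = ∑ p : pairPoset C, if σ (g p) then x p else 0 := by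
      intro g
      rw [Finset.sum_comm]
      apply Finset.sum_congr rfl
      intro p _
      rw [Finset.sum_ite_eq (univ.filter σ) (g p) (fun _ => x p)]
      simp
    simp only [Fmap]
    rw [Finset.sum_add_distrib, mul_add]
    rw [← Finset.sum_div, ← Finset.sum_div]
    rw [e1 (fun p => p.val.1), e1 (fun p => p.val.2)]
    ring
  by_cases hM : (∑ p : pairPoset C, if σ p.val.1 then x p else 0) = 0
  · rw [hsplit, hM, zero_add]
    have hle : (∑ p : pairPoset C, if σ p.val.2 then x p else 0) ≤ 1 := by
      rw [← hx1]
      apply Finset.sum_le_sum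
      intro p _
      split_ifs
      · exact le_refl _
      · exact hx0 p
    exact (min_eq_left hle).symm
  · obtain ⟨p₀, _, h0⟩ := Finset.exists_ne_zero_of_sum_ne_zero hM
    have hx0' : x p₀ ≠ 0 := by intro h; rw [h] at h0; simp at h0
    have hσ1 : σ p₀.val.1 := by by_contra h; rw [if_neg h] at h0; exact h0 rfl
    have hall : ∀ p : pairPoset C, x p ≠ 0 → σ p.val.2 := by
      intro p hxp
      by_cases hpq : p = p₀
      · subst hpq; exact hσ _ _ p.prop hσ1
      · rcases hch (Function.mem_support.mpr hxp) (Function.mem_support.mpr hx0') hpq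
          with hle | hle
        · exact hσ _ _ (le_trans hle.1 p.prop) hσ1
        · exact hσ _ _ (le_trans p₀.prop hle.2) hσ1
    have hfull : (∑ p : pairPoset C, if σ p.val.2 then x p else 0) = 1 := by
      rw [← hx1]
      apply Finset.sum_congr rfl
      intro p _
      by_cases hxp : x p = 0
      · split_ifs <;> simp [hxp]
      · rw [if_pos (hall p hxp)]
    have hMn : 0 ≤ (∑ p : pairPoset C, if σ p.val.1 then x p else 0) := by
      apply Finset.sum_nonneg
      intro p _
      by_cases h : σ p.val.1
      · rw [if_pos h]; exact hx0 p
      · rw [if_neg h]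
    rw [hfull]
    rw [eq_comm]
    apply min_eq_right
    rw [hsplit, hfull]
    linarith

end inj
theorem eq_Gmap_Fmap (x : pairPoset C → ℝ)
    (hx0 : ∀ p, 0 ≤ x p) (hx1 : ∑ p, x p = 1)
    (hch : IsChain pairLE (Function.support x)) (p : pairPoset C) :
    x p = Gmap (Fmap x) p.val := by
  set i := p.val.1 with hi
  set j := p.val.2 with hj
  -- indicator identity
  have key : ∀ q : pairPoset C,
      (if q = p then x q else 0) =
      (if q.val.1 ≤ i ∧ j ≤ q.val.2 then x q else 0)
        - (if q.val.1 < i ∧ j ≤ q.val.2 then x q else 0)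
        - (if q.val.1 ≤ i ∧ j < q.val.2 then x q else 0)
        + (if q.val.1 < i ∧ j < q.val.2 then x q else 0) := by
    intro q
    have hq : (q = p) ↔ (q.val.1 = i ∧ q.val.2 = j) := by
      constructor
      · rintro rfl; exact ⟨rfl, rfl⟩
      · rintro ⟨a, b⟩
        exact Subtype.ext (Prod.ext a b)
    apply ite_comb _ _ _ _ _ _ (fun h => h.le) (fun h => h.le)
    rw [hq]
    constructor
    · rintro ⟨h1, h2⟩
      exact ⟨h1.le, by simp [h1], h2.ge, by simp [h2]⟩
    · rintro ⟨h1, h2, h3, h4⟩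
      exact ⟨le_antisymm h1 (not_lt.mp h2), le_antisymm (not_lt.mp h4) h3⟩
  have hsum : x p = ∑ q : pairPoset C,
      ((if q.val.1 ≤ i ∧ j ≤ q.val.2 then x q else 0)
        - (if q.val.1 < i ∧ j ≤ q.val.2 then x q else 0)
        - (if q.val.1 ≤ i ∧ j < q.val.2 then x q else 0)
        + (if q.val.1 < i ∧ j < q.val.2 then x q else 0)) := by
    rw [← Finset.sum_congr rfl (fun q _ => key q),
      Finset.sum_ite_eq' univ p x]
    simp
  rw [hsum, Finset.sum_add_distrib, Finset.sum_sub_distrib, Finset.sum_sub_distrib]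
  rw [sum_inter_min x hx0 hch (fun q => q.val.1 ≤ i) (fun q => j ≤ q.val.2)
      (fun a b hle h => le_trans hle.1 h) (fun a b hle h => le_trans h hle.2),
    sum_inter_min x hx0 hch (fun q => q.val.1 < i) (fun q => j ≤ q.val.2)
      (fun a b hle h => lt_of_le_of_lt hle.1 h) (fun a b hle h => le_trans h hle.2),
    sum_inter_min x hx0 hch (fun q => q.val.1 ≤ i) (fun q => j < q.val.2)
      (fun a b hle h => le_trans hle.1 h) (fun a b hle h => lt_of_lt_of_le h hle.2),
    sum_inter_min x hx0 hch (fun q => q.val.1 < i) (fun q => j < q.val.2)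
      (fun a b hle h => lt_of_le_of_lt hle.1 h) (fun a b hle h => lt_of_lt_of_le h hle.2)]
  rw [margL x hx0 hx1 hch (fun c => c ≤ i) (fun c c' h h' => le_trans h h'),
    margL x hx0 hx1 hch (fun c => c < i) (fun c c' h h' => lt_of_le_of_lt h h'),
    margR x hx0 hx1 hch (fun c => j ≤ c) (fun c c' h h' => le_trans h' h),
    margR x hx0 hx1 hch (fun c => j < c) (fun c c' h h' => lt_of_lt_of_le h' h)]
  simp only [Gmap, SA, SA', SB, SB']
  rfl
theorem Fmap_mem (x : pairPoset C → ℝ) (hx0 : ∀ p, 0 ≤ x p) (hx1 : ∑ p, x p = 1) :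
    Fmap x ∈ stdSimplex ℝ C := by
  constructor
  · intro c
    have h1 : (0:ℝ) ≤ ∑ p : pairPoset C, if p.val.1 = c then x p else 0 :=
      Finset.sum_nonneg fun p _ => by
        by_cases h : p.val.1 = c
        · rw [if_pos h]; exact hx0 p
        · rw [if_neg h]
    have h2 : (0:ℝ) ≤ ∑ p : pairPoset C, if p.val.2 = c then x p else 0 :=
      Finset.sum_nonneg fun p _ => by
        by_cases h : p.val.2 = c
        · rw [if_pos h]; exact hx0 p
        · rw [if_neg h]
    simp only [Fmap]
    positivity
  · have e : ∀ (g : pairPoset C → C),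
        (∑ c : C, ∑ p : pairPoset C, if g p = c then x p else 0) = 1 := by
      intro g
      rw [Finset.sum_comm, ← hx1]
      apply Finset.sum_congr rfl
      intro p _
      rw [Finset.sum_ite_eq univ (g p) (fun _ => x p)]
      simp
    simp only [Fmap]
    rw [Finset.sum_add_distrib, ← Finset.sum_div, ← Finset.sum_div,
      e (fun p => p.val.1), e (fun p => p.val.2)]
    norm_num

theorem Gmap_mem (y : C → ℝ) (hy0 : ∀ c, 0 ≤ y c) (hy1 : ∑ c, y c = 1) :
    (fun p : pairPoset C => Gmap y p.val) ∈ pairRealization C := by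
  refine ⟨⟨fun p => Gmap_nonneg y hy0 p.val, ?_⟩, ?_⟩
  · rw [sum_pairPoset (Gmap y), sum_pair_eq_univ (Gmap y) (Gmap_eq_zero_of_lt y hy0 hy1)]
    exact Gtotal y hy0 hy1
  · intro p hp q hq hne
    simp only [Function.mem_support] at hp hq
    by_contra hcon
    push_neg at hcon
    obtain ⟨h1, h2⟩ := hcon
    simp only [pairLE, not_and_or, not_le] at h1 h2
    rcases h1 with h1 | h1 <;> rcases h2 with h2 | h2
    · exact absurd h1 (lt_asymm h2)
    · exact Gmap_support_nested y hy0 p.val q.val hp hq h1 h2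
    · exact Gmap_support_nested y hy0 q.val p.val hq hp h2 h1
    · exact absurd h1 (lt_asymm h2)

theorem isCompact_pairRealization : IsCompact (pairRealization C) := by
  have heq : pairRealization C = stdSimplex ℝ (pairPoset C) ∩
      (⋂ (p : pairPoset C), ⋂ (q : pairPoset C),
        {x : pairPoset C → ℝ | x p ≠ 0 → x q ≠ 0 → p ≠ q → pairLE p q ∨ pairLE q p}) := by
    ext x
    simp only [pairRealization, Set.mem_setOf_eq, Set.mem_inter_iff, Set.mem_iInter]
    constructor
    · rintro ⟨hs, hc⟩
      exact ⟨hs, fun p q hp hq hne => hc (Function.mem_support.mpr hp)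
        (Function.mem_support.mpr hq) hne⟩
    · rintro ⟨hs, hc⟩
      refine ⟨hs, fun p hp q hq hne => ?_⟩
      exact hc p q (Function.mem_support.mp hp) (Function.mem_support.mp hq) hne
  rw [heq]
  apply (isCompact_stdSimplex ℝ (pairPoset C)).inter_right
  apply isClosed_iInter
  intro p
  apply isClosed_iInter
  intro q
  by_cases h : p ≠ q → (pairLE p q ∨ pairLE q p)
  · have : {x : pairPoset C → ℝ | x p ≠ 0 → x q ≠ 0 → p ≠ q → pairLE p q ∨ pairLE q p}
        = Set.univ := by
      ext x; simp only [Set.mem_setOf_eq, Set.mem_univ, iff_true]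
      intro _ _ hne; exact h hne
    rw [this]; exact isClosed_univ
  · push_neg at h
    obtain ⟨hne, hnc⟩ := h
    have : {x : pairPoset C → ℝ | x p ≠ 0 → x q ≠ 0 → p ≠ q → pairLE p q ∨ pairLE q p}
        = {x : pairPoset C → ℝ | x p = 0} ∪ {x : pairPoset C → ℝ | x q = 0} := by
      ext x
      simp only [Set.mem_setOf_eq, Set.mem_union]
      constructor
      · intro hx
        by_contra hcon
        push_neg at hcon
        rcases hx hcon.1 hcon.2 hne with h | h
        · exact hnc.1 h
        · exact hnc.2 h
      · rintro (h0 | h0) <;> intro hp hq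
        · exact absurd h0 hp
        · exact absurd h0 hq
    rw [this]
    exact (isClosed_eq (continuous_apply p) continuous_const).union
      (isClosed_eq (continuous_apply q) continuous_const)

theorem continuous_Fmap : Continuous fun x : pairPoset C → ℝ => Fmap x := by
  apply continuous_pi
  intro c
  apply Continuous.add
  · apply Continuous.div_const
    apply continuous_finset_sum
    intro p _
    by_cases h : p.val.1 = c
    · simp only [if_pos h]; exact continuous_apply p
    · simp only [if_neg h]; exact continuous_const
  · apply Continuous.div_const
    apply continuous_finset_sum
    intro p _
    by_cases h : p.val.2 = c
    · simp only [if_pos h]; exact continuous_apply p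
    · simp only [if_neg h]; exact continuous_const

end PairSub

/-- The canonical map `F(x)(c) = ½ Σ_{(i,j) : i = c} x(i,j) + ½ Σ_{(i,j) : j = c} x(i,j)`
is a homeomorphism from the realized order complex `|P_C|` onto the full standard
simplex on `C`. -/
theorem pairRealization_homeo_stdSimplex (C : Type*) [Fintype C] [LinearOrder C]
    [Nonempty C] :
    ∃ h : pairRealization C ≃ₜ stdSimplex ℝ C,
      ∀ (x : pairRealization C) (c : C),
        (h x : C → ℝ) c =
          (∑ p : pairPoset C, if p.val.1 = c then (x : pairPoset C → ℝ) p else 0) / 2 +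
          (∑ p : pairPoset C, if p.val.2 = c then (x : pairPoset C → ℝ) p else 0) / 2 := by
  classical
  have hmem : ∀ x : pairRealization C, PairSub.Fmap (x : pairPoset C → ℝ) ∈ stdSimplex ℝ C :=
    fun x => PairSub.Fmap_mem _ x.2.1.1 x.2.1.2
  let Φ : pairRealization C ≃ stdSimplex ℝ C := Equiv.ofBijective
    (fun x => ⟨PairSub.Fmap (x : pairPoset C → ℝ), hmem x⟩) (by
      constructor
      · intro x₁ x₂ h
        have hF : PairSub.Fmap (x₁ : pairPoset C → ℝ) = PairSub.Fmap (x₂ : pairPoset C → ℝ) :=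
          congrArg Subtype.val h
        apply Subtype.ext
        funext p
        rw [PairSub.eq_Gmap_Fmap _ x₁.2.1.1 x₁.2.1.2 x₁.2.2 p, hF,
          ← PairSub.eq_Gmap_Fmap _ x₂.2.1.1 x₂.2.1.2 x₂.2.2 p]
      · intro y
        refine ⟨⟨fun p => PairSub.Gmap (y : C → ℝ) p.val,
          PairSub.Gmap_mem _ y.2.1 y.2.2⟩, ?_⟩
        apply Subtype.ext
        funext c
        exact PairSub.FGmap (y : C → ℝ) y.2.1 y.2.2 c)
  haveI : CompactSpace (pairRealization C) :=
    isCompact_iff_compactSpace.mp PairSub.isCompact_pairRealization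
  have hcont : Continuous Φ := by
    apply Continuous.subtype_mk
    exact PairSub.continuous_Fmap.comp continuous_subtype_val
  exact ⟨hcont.homeoOfEquivCompactToT2, fun x c => rfl⟩
end

section
/- Let Q be a finite poset, let P ⊆ Q be a subset with the induced order, and let φ : Q → P be a monotone map such that φ(p) = p for all p ∈ P and φ(q) ≤ q for all q ∈ Q. Let |Q| ⊆ stdSimplex(ℝ, Q) be the realized order complex of Q (points with chain support), and identify |P| with the subset of |Q| consisting of points supported on chains contained in P. Then the induced map |φ| : |Q| → |Q| given by |φ|(x)(q') = Σ_{q ∈ Q, φ(q) = q'} x(q) is a well-defined continuous map with image contained in |P|, fixing |P| pointwise, and there is a homotopy H : |Q| × [0,1] → |Q| with H(·,0) = id, H(·,1) = |φ|, and H(x,t) = x for all x ∈ |P| and all t; that is, |φ| is a strong deformation retraction of |Q| onto |P|. -/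
open Finset

/-- The geometric realization of the order complex of a finite poset `Q`: points of the
standard simplex on the vertex set `Q` whose support is a chain. -/
def orderRealization (Q : Type*) [Fintype Q] [PartialOrder Q] : Set (Q → ℝ) :=
  {x | x ∈ stdSimplex ℝ Q ∧ IsChain (· ≤ ·) (Function.support x)}

/-- The subcomplex of `orderRealization Q` consisting of points supported on chains
contained in the subset `P`. -/
def orderRealizationOn (Q : Type*) [Fintype Q] [PartialOrder Q] (P : Set Q) :
    Set (Q → ℝ) :=
  {x | x ∈ orderRealization Q ∧ Function.support x ⊆ P}

/-- The map induced on realizations by a map of posets `φ : Q → Q`: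
`|φ|(x)(q') = Σ_{q : φ(q) = q'} x(q)`. -/
def inducedMap {Q : Type*} [Fintype Q] [DecidableEq Q] (φ : Q → Q) (x : Q → ℝ) :
    Q → ℝ :=
  fun q' => ∑ q : Q, if φ q = q' then x q else 0

section Aux

variable {Q : Type*} [Fintype Q] [PartialOrder Q] [DecidableEq Q]

open scoped Classical

/-- sum of `x` over elements strictly below `q`. -/
noncomputable def sLt (x : Q → ℝ) (q : Q) : ℝ :=
  ∑ q'' : Q, if q'' ≤ q ∧ q'' ≠ q then x q'' else 0

lemma sLt_add_self (x : Q → ℝ) (q : Q) :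
    sLt x q + x q = ∑ q'' : Q, if q'' ≤ q then x q'' else 0 := by
  have : ∀ q'' : Q, (if q'' ≤ q then x q'' else 0) =
      (if q'' ≤ q ∧ q'' ≠ q then x q'' else 0) + (if q'' = q then x q'' else 0) := by
    intro q''
    by_cases h : q'' = q
    · subst h; simp
    · by_cases h2 : q'' ≤ q <;> simp [h, h2]
  rw [Finset.sum_congr rfl (fun q'' _ => this q''), Finset.sum_add_distrib, sLt,
    Finset.sum_ite_eq' Finset.univ q x]
  simp

variable {x : Q → ℝ} (hx0 : ∀ q, 0 ≤ x q)

include hx0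

lemma sLt_nonneg (q : Q) : 0 ≤ sLt x q :=
  Finset.sum_nonneg fun q'' _ => by by_cases h : q'' ≤ q ∧ q'' ≠ q <;> simp [h, hx0 q'']

lemma sLe_le_one (hs : ∑ q : Q, x q = 1) (q : Q) : sLt x q + x q ≤ 1 := by
  rw [sLt_add_self, ← hs]
  exact Finset.sum_le_sum fun q'' _ => by
    by_cases h : q'' ≤ q <;> simp [h, hx0 q'']

lemma sLe_le_sLt (a b : Q) (hba : b ≤ a) (hne : b ≠ a) : sLt x b + x b ≤ sLt x a := by
  rw [sLt_add_self]
  refine Finset.sum_le_sum fun q'' _ => ?_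
  by_cases h : q'' ≤ b
  · have h1 : q'' ≤ a := h.trans hba
    have h2 : q'' ≠ a := by
      rintro rfl
      exact hne (le_antisymm hba h)
    simp [h, h1, h2]
  · by_cases h2 : q'' ≤ a ∧ q'' ≠ a <;> simp [h, h2, hx0 q'']

end Aux

/-- the amount of mass at `q` that has been pushed to `φ q` at time `t`. -/
noncomputable def wOne {Q : Type*} [Fintype Q] [PartialOrder Q] [DecidableEq Q]
    (x : Q → ℝ) (t : ℝ) (q : Q) : ℝ :=
  min (sLt x q + x q) t - min (sLt x q) t

section Aux2

variable {Q : Type*} [Fintype Q] [PartialOrder Q] [DecidableEq Q]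
variable {x : Q → ℝ} (hx0 : ∀ q, 0 ≤ x q)

include hx0

lemma wOne_nonneg (t : ℝ) (q : Q) : 0 ≤ wOne x t q := by
  have : sLt x q ≤ sLt x q + x q := le_add_of_nonneg_right (hx0 q)
  simpa [wOne] using min_le_min this (le_refl t)

lemma wOne_le (t : ℝ) (q : Q) : wOne x t q ≤ x q := by
  have h1 : min (sLt x q + x q) t ≤ min (sLt x q + x q) (t + x q) :=
    min_le_min (le_refl _) (le_add_of_nonneg_right (hx0 q))
  have h2 : min (sLt x q + x q) (t + x q) = min (sLt x q) t + x q :=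
    min_add_add_right _ _ _
  simp only [wOne]
  linarith [h1, h2.le]

omit hx0 in
lemma wOne_of_zero (t : ℝ) (q : Q) (h : x q = 0) : wOne x t q = 0 := by
  simp [wOne, h]

lemma wOne_at_zero (q : Q) : wOne x 0 q = 0 := by
  have h1 : min (sLt x q + x q) 0 = 0 :=
    min_eq_right (by linarith [sLt_nonneg hx0 q, hx0 q])
  have h2 : min (sLt x q) 0 = 0 := min_eq_right (sLt_nonneg hx0 q)
  simp [wOne, h1, h2]

lemma wOne_at_one (hs : ∑ q : Q, x q = 1) (q : Q) : wOne x 1 q = x q := by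
  have h1 : min (sLt x q + x q) 1 = sLt x q + x q := min_eq_left (sLe_le_one hx0 hs q)
  have h2 : min (sLt x q) 1 = sLt x q :=
    min_eq_left (by linarith [sLe_le_one hx0 hs q, hx0 q])
  simp [wOne, h1, h2]

lemma wOne_ne_zero_lt (t : ℝ) (q : Q) (h : wOne x t q ≠ 0) : sLt x q < t := by
  by_contra hc
  push_neg at hc
  have h1 : min (sLt x q) t = t := min_eq_right hc
  have h2 : min (sLt x q + x q) t = t :=
    min_eq_right (hc.trans (le_add_of_nonneg_right (hx0 q)))
  exact h (by simp [wOne, h1, h2])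

lemma wZero_ne_zero_lt (t : ℝ) (q : Q) (h : x q - wOne x t q ≠ 0) :
    t < sLt x q + x q := by
  by_contra hc
  push_neg at hc
  have h1 : min (sLt x q + x q) t = sLt x q + x q := min_eq_left hc
  have h2 : min (sLt x q) t = sLt x q := min_eq_left (by linarith [hx0 q])
  exact h (by simp [wOne, h1, h2])

omit hx0 in
lemma wOne_ne_zero_supp (t : ℝ) (q : Q) (h : wOne x t q ≠ 0) : x q ≠ 0 :=
  fun hq => h (wOne_of_zero t q hq)

omit hx0 in
lemma wZero_ne_zero_supp (t : ℝ) (q : Q) (h : x q - wOne x t q ≠ 0) : x q ≠ 0 := by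
  intro hq
  exact h (by simp [hq, wOne_of_zero t q hq])

/-- key comparison: if mass still moves at `a` and mass remains at `b`, then `a ≤ b`. -/
lemma key_le (hc : IsChain (· ≤ ·) (Function.support x)) (t : ℝ) (a b : Q)
    (ha : wOne x t a ≠ 0) (hb : x b - wOne x t b ≠ 0) : a ≤ b := by
  have hxa : x a ≠ 0 := wOne_ne_zero_supp t a ha
  have hxb : x b ≠ 0 := wZero_ne_zero_supp t b hb
  by_cases hab : a = b
  · exact hab.le
  rcases hc hxa hxb hab with h | h
  · exact h
  · exfalso
    have h1 := wOne_ne_zero_lt hx0 t a ha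
    have h2 := wZero_ne_zero_lt hx0 t b hb
    have h3 := sLe_le_sLt hx0 a b h (Ne.symm hab)
    linarith

end Aux2

section Homotopy

variable {Q : Type*} [Fintype Q] [PartialOrder Q] [DecidableEq Q]

/-- the homotopy formula. -/
noncomputable def hFun (φ : Q → Q) (x : Q → ℝ) (t : ℝ) : Q → ℝ :=
  fun q' => x q' - wOne x t q' + ∑ q : Q, if φ q = q' then wOne x t q else 0

lemma hFun_mem (φ : Q → Q) (hmono : Monotone φ) (hle : ∀ q, φ q ≤ q)
    (x : Q → ℝ) (hx : x ∈ orderRealization Q) (t : ℝ) :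
    hFun φ x t ∈ orderRealization Q := by
  obtain ⟨⟨hx0, hxs⟩, hxc⟩ := hx
  have hsupp : ∀ q' : Q, hFun φ x t q' ≠ 0 →
      (x q' - wOne x t q' ≠ 0) ∨ ∃ a, φ a = q' ∧ wOne x t a ≠ 0 := by
    intro q' hq'
    by_cases h1 : x q' - wOne x t q' ≠ 0
    · exact Or.inl h1
    push_neg at h1
    right
    have hsum : ∑ q : Q, (if φ q = q' then wOne x t q else 0) ≠ 0 := by
      intro h2
      exact hq' (by simp [hFun, h1, h2])
    obtain ⟨a, _, ha⟩ := Finset.exists_ne_zero_of_sum_ne_zero hsum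
    by_cases h : φ a = q'
    · exact ⟨a, h, by simpa [h] using ha⟩
    · simp [h] at ha
  refine ⟨⟨fun q' => ?_, ?_⟩, ?_⟩
  · refine add_nonneg (by linarith [wOne_le hx0 t q']) (Finset.sum_nonneg fun q _ => ?_)
    by_cases h : φ q = q' <;> simp [h, wOne_nonneg hx0 t q]
  · simp only [hFun]
    rw [Finset.sum_add_distrib, Finset.sum_sub_distrib, Finset.sum_comm]
    have hrow : ∀ q : Q, (∑ q' : Q, if φ q = q' then wOne x t q else 0) = wOne x t q := by
      intro q
      rw [Finset.sum_ite_eq Finset.univ (φ q) (fun _ => wOne x t q)]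
      simp
    rw [Finset.sum_congr rfl fun q _ => hrow q, hxs]
    ring
  · intro q1 hq1 q2 hq2 hne
    rcases hsupp q1 hq1 with h1 | ⟨a, rfl, ha⟩ <;>
      rcases hsupp q2 hq2 with h2 | ⟨b, rfl, hb⟩
    · exact hxc (wZero_ne_zero_supp t q1 h1) (wZero_ne_zero_supp t q2 h2) hne
    · exact Or.inr ((hle b).trans (key_le hx0 hxc t b q1 hb h1))
    · exact Or.inl ((hle a).trans (key_le hx0 hxc t a q2 ha h2))
    · have hxa : x a ≠ 0 := wOne_ne_zero_supp t a ha
      have hxb : x b ≠ 0 := wOne_ne_zero_supp t b hb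
      by_cases hab : a = b
      · exact absurd (congrArg φ hab) hne
      rcases hxc hxa hxb hab with h | h
      · exact Or.inl (hmono h)
      · exact Or.inr (hmono h)

lemma hFun_at_zero (φ : Q → Q) (x : Q → ℝ) (hx0 : ∀ q, 0 ≤ x q) :
    hFun φ x 0 = x := by
  funext q'
  simp [hFun, wOne_at_zero hx0]

lemma hFun_at_one (φ : Q → Q) (x : Q → ℝ) (hx0 : ∀ q, 0 ≤ x q)
    (hs : ∑ q : Q, x q = 1) (q' : Q) :
    hFun φ x 1 q' = inducedMap φ x q' := by
  simp only [hFun, inducedMap, wOne_at_one hx0 hs, sub_self, zero_add]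

lemma hFun_fix (φ : Q → Q) {P : Set Q} (hfix : ∀ p ∈ P, φ p = p)
    (x : Q → ℝ) (hxP : Function.support x ⊆ P) (t : ℝ) :
    hFun φ x t = x := by
  funext q'
  have : ∀ q : Q, (if φ q = q' then wOne x t q else 0) =
      (if q = q' then wOne x t q else 0) := by
    intro q
    by_cases hq : x q = 0
    · simp [wOne_of_zero t q hq]
    · rw [hfix q (hxP hq)]
  simp only [hFun, this]
  rw [Finset.sum_ite_eq' Finset.univ q' (fun q => wOne x t q)]
  simp

lemma hFun_continuous (φ : Q → Q) :
    Continuous (fun p : (Q → ℝ) × ℝ => hFun φ p.1 p.2) := by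
  classical
  apply continuous_pi
  intro q'
  have hsLt : ∀ q : Q, Continuous (fun p : (Q → ℝ) × ℝ => sLt p.1 q) := by
    intro q
    apply continuous_finset_sum
    intro q'' _
    by_cases h : q'' ≤ q ∧ q'' ≠ q
    · simp only [if_pos h]
      exact (continuous_apply q'').comp continuous_fst
    · simpa [h] using continuous_const
  have hw : ∀ q : Q, Continuous (fun p : (Q → ℝ) × ℝ => wOne p.1 p.2 q) := by
    intro q
    exact (((hsLt q).add ((continuous_apply q).comp continuous_fst)).min
      continuous_snd).sub ((hsLt q).min continuous_snd)
  refine (((continuous_apply q').comp continuous_fst).sub (hw q')).add ?_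
  apply continuous_finset_sum
  intro q _
  by_cases h : φ q = q'
  · simpa [h] using hw q
  · simpa [h] using continuous_const

end Homotopy



/-- If `φ : Q → Q` is a monotone retraction of the finite poset `Q` onto a subset `P`
with `φ(q) ≤ q` for all `q`, then the induced map `|φ|` maps `|Q|` into `|P|`, and it is
a strong deformation retraction of `|Q|` onto `|P|`: there is a homotopy `H` from the
identity to `|φ|` fixing `|P|` pointwise throughout. -/
theorem orderRealization_strong_deformation_retract (Q : Type*) [Fintype Q]
    [PartialOrder Q] [DecidableEq Q] (P : Set Q) (φ : Q → Q)
    (hφP : ∀ q, φ q ∈ P)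
    (hmono : Monotone φ)
    (hfix : ∀ p ∈ P, φ p = p)
    (hle : ∀ q, φ q ≤ q) :
    (∀ x ∈ orderRealization Q, inducedMap φ x ∈ orderRealizationOn Q P) ∧
    ∃ H : C(↥(orderRealization Q) × unitInterval, ↥(orderRealization Q)),
      (∀ x, H (x, 0) = x) ∧
      (∀ (x : ↥(orderRealization Q)) (q' : Q),
        ((H (x, 1) : Q → ℝ) q') = inducedMap φ (x : Q → ℝ) q') ∧
      (∀ x : ↥(orderRealization Q), (x : Q → ℝ) ∈ orderRealizationOn Q P →
        ∀ t : unitInterval, H (x, t) = x) := by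
  constructor
  · rintro x ⟨⟨hx0, hxs⟩, hxc⟩
    have hsupp : ∀ q' : Q, inducedMap φ x q' ≠ 0 → ∃ a, φ a = q' ∧ x a ≠ 0 := by
      intro q' hq'
      obtain ⟨a, _, ha⟩ := Finset.exists_ne_zero_of_sum_ne_zero hq'
      by_cases h : φ a = q'
      · exact ⟨a, h, by simpa [h] using ha⟩
      · simp [h] at ha
    refine ⟨⟨⟨fun q' => Finset.sum_nonneg fun q _ => ?_, ?_⟩, ?_⟩, ?_⟩
    · by_cases h : φ q = q' <;> simp [h, hx0 q]
    · simp only [inducedMap]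
      rw [Finset.sum_comm]
      have hrow : ∀ q : Q, (∑ q' : Q, if φ q = q' then x q else 0) = x q := by
        intro q
        rw [Finset.sum_ite_eq Finset.univ (φ q) (fun _ => x q)]
        simp
      rw [Finset.sum_congr rfl fun q _ => hrow q, hxs]
    · intro q1 hq1 q2 hq2 hne
      obtain ⟨a, rfl, ha⟩ := hsupp q1 hq1
      obtain ⟨b, rfl, hb⟩ := hsupp q2 hq2
      by_cases hab : a = b
      · exact absurd (congrArg φ hab) hne
      rcases hxc ha hb hab with h | h
      · exact Or.inl (hmono h)
      · exact Or.inr (hmono h)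
    · intro q' hq'
      obtain ⟨a, rfl, _⟩ := hsupp q' hq'
      exact hφP a
  · refine ⟨⟨fun p => ⟨hFun φ (p.1 : Q → ℝ) (p.2 : ℝ) ,
      hFun_mem φ hmono hle _ p.1.2 _⟩, ?_⟩, ?_, ?_, ?_⟩
    · refine Continuous.subtype_mk ?_ _
      exact (hFun_continuous φ).comp
        ((continuous_subtype_val.comp continuous_fst).prodMk
          (continuous_subtype_val.comp continuous_snd))
    · intro x
      exact Subtype.ext (hFun_at_zero φ _ x.2.1.1)
    · intro x q'
      exact hFun_at_one φ _ x.2.1.1 x.2.1.2 q'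
    · intro x hxP t
      exact Subtype.ext (hFun_fix φ hfix _ hxP.2 _)
end

section
/- Let r = 2 with generators x, y, and let w = [x,y] = x y x^{−1} y^{−1} ∈ F_2. Then for every n ≥ 1, Tr_{[x,y]}(n) = ∫_{U(n)^2} tr(A B A^{−1} B^{−1}) dμ_n(A) dμ_n(B) = 1/n. -/
open MeasureTheory
open scoped commutatorElement

namespace TrwAux

open Matrix

variable {n : ℕ}

instance instSC : SecondCountableTopology (Matrix (Fin n) (Fin n) ℂ) :=
  inferInstanceAs (SecondCountableTopology (Fin n → Fin n → ℂ))

instance : BorelSpace (Matrix.unitaryGroup (Fin n) ℂ) := ⟨rfl⟩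

instance : SecondCountableTopology (Matrix.unitaryGroup (Fin n) ℂ) :=
  TopologicalSpace.Subtype.secondCountableTopology
    (Matrix.unitaryGroup (Fin n) ℂ : Set (Matrix (Fin n) (Fin n) ℂ))

lemma coe_inv_eq_star (B : Matrix.unitaryGroup (Fin n) ℂ) :
    ((B⁻¹ : Matrix.unitaryGroup (Fin n) ℂ) : Matrix (Fin n) (Fin n) ℂ) =
      star (B : Matrix (Fin n) (Fin n) ℂ) := by
  rw [← Unitary.star_eq_inv]; rfl

instance : CompactSpace (Matrix.unitaryGroup (Fin n) ℂ) := by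
  have hK : IsCompact (Set.univ.pi fun _ : Fin n =>
      Set.univ.pi fun _ : Fin n => Metric.closedBall (0:ℂ) 1) :=
    isCompact_univ_pi fun _ => isCompact_univ_pi fun _ => isCompact_closedBall _ _
  have hcl : IsClosed (Matrix.unitaryGroup (Fin n) ℂ : Set (Matrix (Fin n) (Fin n) ℂ)) := by
    have he : (Matrix.unitaryGroup (Fin n) ℂ : Set (Matrix (Fin n) (Fin n) ℂ)) =
        {A | A * star A = 1} := by
      ext A; exact Matrix.mem_unitaryGroup_iff
    rw [he]
    exact isClosed_eq (continuous_id.matrix_mul continuous_star) continuous_const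
  refine isCompact_iff_compactSpace.mp (IsCompact.of_isClosed_subset hK hcl ?_)
  intro A hA
  intro i _
  intro j _
  simpa [dist_zero_right] using entry_norm_bound_of_unitary hA i j

lemma cont_coe : Continuous fun B : Matrix.unitaryGroup (Fin n) ℂ =>
    (B : Matrix (Fin n) (Fin n) ℂ) := continuous_subtype_val

lemma cont_coe_inv : Continuous fun B : Matrix.unitaryGroup (Fin n) ℂ =>
    ((B⁻¹ : Matrix.unitaryGroup (Fin n) ℂ) : Matrix (Fin n) (Fin n) ℂ) := by
  simp only [coe_inv_eq_star]
  exact continuous_star.comp continuous_subtype_val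

variable (μ : Measure (Matrix.unitaryGroup (Fin n) ℂ)) [IsProbabilityMeasure μ]

lemma cont_integrable {f : Matrix.unitaryGroup (Fin n) ℂ → ℂ} (hf : Continuous f) :
    Integrable f μ :=
  hf.integrable_of_hasCompactSupport (HasCompactSupport.of_compactSpace f)

lemma cont_entry (M : Matrix (Fin n) (Fin n) ℂ) (i j : Fin n) :
    Continuous fun B : Matrix.unitaryGroup (Fin n) ℂ =>
      ((B : Matrix (Fin n) (Fin n) ℂ) * M * ((B⁻¹ : Matrix.unitaryGroup (Fin n) ℂ) :
        Matrix (Fin n) (Fin n) ℂ)) i j :=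
  ((cont_coe.matrix_mul continuous_const).matrix_mul cont_coe_inv).matrix_elem i j

lemma integrable_entry (M : Matrix (Fin n) (Fin n) ℂ) (i j : Fin n) :
    Integrable (fun B : Matrix.unitaryGroup (Fin n) ℂ =>
      ((B : Matrix (Fin n) (Fin n) ℂ) * M * ((B⁻¹ : Matrix.unitaryGroup (Fin n) ℂ) :
        Matrix (Fin n) (Fin n) ℂ)) i j) μ :=
  cont_integrable μ (cont_entry M i j)

/-- The matrix `∫ B M B⁻¹ dμ(B)`, defined entrywise. -/
noncomputable def conjInt (M : Matrix (Fin n) (Fin n) ℂ) : Matrix (Fin n) (Fin n) ℂ :=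
  Matrix.of fun i j => ∫ B : Matrix.unitaryGroup (Fin n) ℂ,
    ((B : Matrix (Fin n) (Fin n) ℂ) * M * ((B⁻¹ : Matrix.unitaryGroup (Fin n) ℂ) :
      Matrix (Fin n) (Fin n) ℂ)) i j ∂μ

lemma conjInt_apply (M : Matrix (Fin n) (Fin n) ℂ) (i j : Fin n) :
    conjInt μ M i j = ∫ B : Matrix.unitaryGroup (Fin n) ℂ,
      ((B : Matrix (Fin n) (Fin n) ℂ) * M * ((B⁻¹ : Matrix.unitaryGroup (Fin n) ℂ) :
        Matrix (Fin n) (Fin n) ℂ)) i j ∂μ := rfl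

variable [μ.IsHaarMeasure]

lemma conjInt_conj_invariant (M : Matrix (Fin n) (Fin n) ℂ)
    (U : Matrix.unitaryGroup (Fin n) ℂ) :
    (U : Matrix (Fin n) (Fin n) ℂ) * conjInt μ M *
      ((U⁻¹ : Matrix.unitaryGroup (Fin n) ℂ) : Matrix (Fin n) (Fin n) ℂ) = conjInt μ M := by
  ext i j
  have key : ∀ B : Matrix.unitaryGroup (Fin n) ℂ,
      ((U : Matrix (Fin n) (Fin n) ℂ) *
        ((B : Matrix (Fin n) (Fin n) ℂ) * M * ((B⁻¹ : Matrix.unitaryGroup (Fin n) ℂ) :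
          Matrix (Fin n) (Fin n) ℂ)) *
        ((U⁻¹ : Matrix.unitaryGroup (Fin n) ℂ) : Matrix (Fin n) (Fin n) ℂ)) i j
      = (fun C : Matrix.unitaryGroup (Fin n) ℂ =>
          ((C : Matrix (Fin n) (Fin n) ℂ) * M * ((C⁻¹ : Matrix.unitaryGroup (Fin n) ℂ) :
            Matrix (Fin n) (Fin n) ℂ)) i j) (U * B) := by
    intro B
    simp only [_root_.mul_inv_rev, MulMemClass.coe_mul, mul_assoc]
  calc ((U : Matrix (Fin n) (Fin n) ℂ) * conjInt μ M *
      ((U⁻¹ : Matrix.unitaryGroup (Fin n) ℂ) : Matrix (Fin n) (Fin n) ℂ)) i j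
      = ∑ l, ∑ k, (U : Matrix (Fin n) (Fin n) ℂ) i k * conjInt μ M k l *
          ((U⁻¹ : Matrix.unitaryGroup (Fin n) ℂ) : Matrix (Fin n) (Fin n) ℂ) l j := by
        simp only [Matrix.mul_apply, Finset.sum_mul]
  _ = ∑ l, ∑ k, ∫ B : Matrix.unitaryGroup (Fin n) ℂ,
        (U : Matrix (Fin n) (Fin n) ℂ) i k *
          ((B : Matrix (Fin n) (Fin n) ℂ) * M * ((B⁻¹ : Matrix.unitaryGroup (Fin n) ℂ) :
            Matrix (Fin n) (Fin n) ℂ)) k l *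
          ((U⁻¹ : Matrix.unitaryGroup (Fin n) ℂ) : Matrix (Fin n) (Fin n) ℂ) l j ∂μ := by
        refine Finset.sum_congr rfl fun l _ => Finset.sum_congr rfl fun k _ => ?_
        rw [conjInt_apply, ← integral_const_mul, ← integral_mul_const]
  _ = ∫ B : Matrix.unitaryGroup (Fin n) ℂ, ∑ l, ∑ k,
        (U : Matrix (Fin n) (Fin n) ℂ) i k *
          ((B : Matrix (Fin n) (Fin n) ℂ) * M * ((B⁻¹ : Matrix.unitaryGroup (Fin n) ℂ) :
            Matrix (Fin n) (Fin n) ℂ)) k l *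
          ((U⁻¹ : Matrix.unitaryGroup (Fin n) ℂ) : Matrix (Fin n) (Fin n) ℂ) l j ∂μ := by
        rw [show (∑ l, ∑ k, ∫ B : Matrix.unitaryGroup (Fin n) ℂ,
            (U : Matrix (Fin n) (Fin n) ℂ) i k *
              ((B : Matrix (Fin n) (Fin n) ℂ) * M * ((B⁻¹ : Matrix.unitaryGroup (Fin n) ℂ) :
                Matrix (Fin n) (Fin n) ℂ)) k l *
              ((U⁻¹ : Matrix.unitaryGroup (Fin n) ℂ) : Matrix (Fin n) (Fin n) ℂ) l j ∂μ)
            = ∑ l, ∫ B : Matrix.unitaryGroup (Fin n) ℂ, ∑ k,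
            (U : Matrix (Fin n) (Fin n) ℂ) i k *
              ((B : Matrix (Fin n) (Fin n) ℂ) * M * ((B⁻¹ : Matrix.unitaryGroup (Fin n) ℂ) :
                Matrix (Fin n) (Fin n) ℂ)) k l *
              ((U⁻¹ : Matrix.unitaryGroup (Fin n) ℂ) : Matrix (Fin n) (Fin n) ℂ) l j ∂μ from
          Finset.sum_congr rfl fun l _ => (integral_finset_sum _ fun k _ =>
            (((integrable_entry μ M k l).const_mul _).mul_const _)).symm]
        exact (integral_finset_sum _ fun l _ => integrable_finset_sum _ fun k _ =>
            (((integrable_entry μ M k l).const_mul _).mul_const _)).symm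
  _ = ∫ B : Matrix.unitaryGroup (Fin n) ℂ,
        ((U : Matrix (Fin n) (Fin n) ℂ) *
          ((B : Matrix (Fin n) (Fin n) ℂ) * M * ((B⁻¹ : Matrix.unitaryGroup (Fin n) ℂ) :
            Matrix (Fin n) (Fin n) ℂ)) *
          ((U⁻¹ : Matrix.unitaryGroup (Fin n) ℂ) : Matrix (Fin n) (Fin n) ℂ)) i j ∂μ := by
        refine integral_congr_ae (Filter.Eventually.of_forall fun B => ?_)
        simp only [Matrix.mul_apply, Finset.sum_mul]
  _ = ∫ B : Matrix.unitaryGroup (Fin n) ℂ,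
        (fun C : Matrix.unitaryGroup (Fin n) ℂ =>
          ((C : Matrix (Fin n) (Fin n) ℂ) * M * ((C⁻¹ : Matrix.unitaryGroup (Fin n) ℂ) :
            Matrix (Fin n) (Fin n) ℂ)) i j) (U * B) ∂μ := by
        exact integral_congr_ae (Filter.Eventually.of_forall fun B => key B)
  _ = conjInt μ M i j :=
        integral_mul_left_eq_self (fun C : Matrix.unitaryGroup (Fin n) ℂ =>
          ((C : Matrix (Fin n) (Fin n) ℂ) * M * ((C⁻¹ : Matrix.unitaryGroup (Fin n) ℂ) :
            Matrix (Fin n) (Fin n) ℂ)) i j) U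

lemma commute_of_conj_invariant (C : Matrix (Fin n) (Fin n) ℂ)
    (h : ∀ U : Matrix.unitaryGroup (Fin n) ℂ,
      (U : Matrix (Fin n) (Fin n) ℂ) * C *
        ((U⁻¹ : Matrix.unitaryGroup (Fin n) ℂ) : Matrix (Fin n) (Fin n) ℂ) = C)
    (U : Matrix.unitaryGroup (Fin n) ℂ) :
    (U : Matrix (Fin n) (Fin n) ℂ) * C = C * (U : Matrix (Fin n) (Fin n) ℂ) := by
  have := h U
  calc (U : Matrix (Fin n) (Fin n) ℂ) * C
      = ((U : Matrix (Fin n) (Fin n) ℂ) * C *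
          ((U⁻¹ : Matrix.unitaryGroup (Fin n) ℂ) : Matrix (Fin n) (Fin n) ℂ)) *
          (U : Matrix (Fin n) (Fin n) ℂ) := by
        rw [mul_assoc, mul_assoc, ← MulMemClass.coe_mul, inv_mul_cancel]
        simp
  _ = C * (U : Matrix (Fin n) (Fin n) ℂ) := by rw [this]

lemma diag_unitary_mem (i : Fin n) :
    Matrix.diagonal (fun k => if k = i then Complex.I else 1) ∈
      Matrix.unitaryGroup (Fin n) ℂ := by
  rw [Matrix.mem_unitaryGroup_iff]
  rw [Matrix.star_eq_conjTranspose, Matrix.diagonal_conjTranspose,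
    Matrix.diagonal_mul_diagonal]
  ext a b
  by_cases hab : a = b
  · subst hab
    by_cases ha : a = i <;>
      simp [Matrix.diagonal_apply_eq, Matrix.one_apply_eq, ha, Pi.star_apply,
        Complex.star_def, Complex.mul_conj, Complex.normSq_I]
  · simp [Matrix.diagonal_apply_ne _ hab, Matrix.one_apply_ne hab]

lemma offdiag_eq_zero (C : Matrix (Fin n) (Fin n) ℂ)
    (h : ∀ U : Matrix.unitaryGroup (Fin n) ℂ,
      (U : Matrix (Fin n) (Fin n) ℂ) * C = C * (U : Matrix (Fin n) (Fin n) ℂ))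
    {i j : Fin n} (hij : i ≠ j) : C i j = 0 := by
  have hU := h ⟨Matrix.diagonal (fun k => if k = i then Complex.I else 1), diag_unitary_mem i⟩
  have h2 : (Matrix.diagonal (fun k => if k = i then Complex.I else 1) * C) i j =
      (C * Matrix.diagonal (fun k => if k = i then Complex.I else 1)) i j := by
    exact congrFun (congrFun hU i) j
  rw [Matrix.diagonal_mul, Matrix.mul_diagonal, if_pos rfl, if_neg (Ne.symm hij)] at h2
  have h3 : (Complex.I - 1) * C i j = 0 := by
    rw [mul_one] at h2
    rw [sub_mul, h2]
    ring
  rcases mul_eq_zero.mp h3 with h4 | h4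
  · exfalso
    apply sub_ne_zero.mpr _ h4
    intro hI
    have := congrArg Complex.im hI
    simp at this
  · exact h4

lemma swap_unitary_mem (i j : Fin n) :
    ((Equiv.swap i j).toPEquiv.toMatrix : Matrix (Fin n) (Fin n) ℂ) ∈
      Matrix.unitaryGroup (Fin n) ℂ := by
  rw [Matrix.mem_unitaryGroup_iff]
  have hstar : (star ((Equiv.swap i j).toPEquiv.toMatrix : Matrix (Fin n) (Fin n) ℂ)) =
      ((Equiv.swap i j).symm.toPEquiv.toMatrix : Matrix (Fin n) (Fin n) ℂ) := by
    rw [Equiv.toPEquiv_symm, PEquiv.toMatrix_symm, Matrix.star_eq_conjTranspose]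
    ext a b
    simp [Matrix.conjTranspose_apply, PEquiv.toMatrix_apply, Matrix.transpose_apply, apply_ite]
  rw [hstar, ← PEquiv.toMatrix_trans, ← Equiv.toPEquiv_trans, Equiv.self_trans_symm,
    Equiv.toPEquiv_refl, PEquiv.toMatrix_refl]

lemma diag_eq (C : Matrix (Fin n) (Fin n) ℂ)
    (h : ∀ U : Matrix.unitaryGroup (Fin n) ℂ,
      (U : Matrix (Fin n) (Fin n) ℂ) * C = C * (U : Matrix (Fin n) (Fin n) ℂ))
    (i j : Fin n) : C i i = C j j := by
  have hU := h ⟨((Equiv.swap i j).toPEquiv.toMatrix : Matrix (Fin n) (Fin n) ℂ),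
    swap_unitary_mem i j⟩
  have h2 : ((Equiv.swap i j).toPEquiv.toMatrix * C : Matrix (Fin n) (Fin n) ℂ) i j =
      (C * (Equiv.swap i j).toPEquiv.toMatrix : Matrix (Fin n) (Fin n) ℂ) i j :=
    congrFun (congrFun hU i) j
  rw [PEquiv.toMatrix_toPEquiv_mul, PEquiv.mul_toMatrix_toPEquiv] at h2
  simpa [Matrix.submatrix_apply, Equiv.swap_apply_left, Equiv.symm_swap,
    Equiv.swap_apply_right] using h2.symm

lemma scalar_of_commutes (hn : 1 ≤ n) (C : Matrix (Fin n) (Fin n) ℂ)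
    (h : ∀ U : Matrix.unitaryGroup (Fin n) ℂ,
      (U : Matrix (Fin n) (Fin n) ℂ) * C = C * (U : Matrix (Fin n) (Fin n) ℂ)) :
    C = (Matrix.trace C / n) • (1 : Matrix (Fin n) (Fin n) ℂ) := by
  have hne : (n : ℂ) ≠ 0 := by
    exact_mod_cast Nat.cast_ne_zero.mpr (by omega)
  set i₀ : Fin n := ⟨0, by omega⟩
  have htr : Matrix.trace C = n * C i₀ i₀ := by
    rw [Matrix.trace]
    have : ∀ i : Fin n, Matrix.diag C i = C i₀ i₀ := fun i => diag_eq C h i i₀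
    rw [Finset.sum_congr rfl fun i _ => this i]
    simp [Finset.card_univ, mul_comm]
  ext i j
  by_cases hij : i = j
  · subst hij
    rw [Matrix.smul_apply, Matrix.one_apply_eq, smul_eq_mul, mul_one, htr,
      mul_comm (n : ℂ) _, mul_div_assoc, div_self hne, mul_one]
    exact diag_eq C h i i₀
  · rw [Matrix.smul_apply, Matrix.one_apply_ne hij, smul_eq_mul, mul_zero]
    exact offdiag_eq_zero C h hij

lemma trace_conjInt (M : Matrix (Fin n) (Fin n) ℂ) :
    Matrix.trace (conjInt μ M) = Matrix.trace M := by
  rw [Matrix.trace]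
  have : ∀ i : Fin n, Matrix.diag (conjInt μ M) i =
      ∫ B : Matrix.unitaryGroup (Fin n) ℂ,
        ((B : Matrix (Fin n) (Fin n) ℂ) * M * ((B⁻¹ : Matrix.unitaryGroup (Fin n) ℂ) :
          Matrix (Fin n) (Fin n) ℂ)) i i ∂μ := fun i => rfl
  rw [Finset.sum_congr rfl fun i _ => this i, ← integral_finset_sum _
    (fun i _ => integrable_entry μ M i i)]
  have heq : ∀ B : Matrix.unitaryGroup (Fin n) ℂ,
      (∑ i, ((B : Matrix (Fin n) (Fin n) ℂ) * M * ((B⁻¹ : Matrix.unitaryGroup (Fin n) ℂ) :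
        Matrix (Fin n) (Fin n) ℂ)) i i) = Matrix.trace M := by
    intro B
    have : (∑ i, ((B : Matrix (Fin n) (Fin n) ℂ) * M * ((B⁻¹ : Matrix.unitaryGroup (Fin n) ℂ) :
        Matrix (Fin n) (Fin n) ℂ)) i i) = Matrix.trace
        ((B : Matrix (Fin n) (Fin n) ℂ) * M * ((B⁻¹ : Matrix.unitaryGroup (Fin n) ℂ) :
          Matrix (Fin n) (Fin n) ℂ)) := rfl
    rw [this, Matrix.trace_mul_cycle, ← MulMemClass.coe_mul, inv_mul_cancel]
    simp
  rw [integral_congr_ae (Filter.Eventually.of_forall heq), integral_const]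
  simp

lemma conjInt_eq_scalar (hn : 1 ≤ n) (M : Matrix (Fin n) (Fin n) ℂ) :
    conjInt μ M = (Matrix.trace M / n) • (1 : Matrix (Fin n) (Fin n) ℂ) := by
  have h := scalar_of_commutes hn (conjInt μ M)
    (commute_of_conj_invariant (conjInt μ M) (conjInt_conj_invariant μ M))
  rw [h, trace_conjInt]

lemma conjInt_entry_eq (hn : 1 ≤ n) (M : Matrix (Fin n) (Fin n) ℂ) (i j : Fin n) :
    ∫ B : Matrix.unitaryGroup (Fin n) ℂ,
      ((B : Matrix (Fin n) (Fin n) ℂ) * M * ((B⁻¹ : Matrix.unitaryGroup (Fin n) ℂ) :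
        Matrix (Fin n) (Fin n) ℂ)) i j ∂μ
      = (Matrix.trace M / n) * (if i = j then 1 else 0) := by
  have h := congrFun (congrFun (conjInt_eq_scalar μ hn M) i) j
  rw [conjInt_apply] at h
  rw [h, Matrix.smul_apply, smul_eq_mul, Matrix.one_apply]

lemma entry_prod_integral (hn : 1 ≤ n) (i j : Fin n) :
    ∫ B : Matrix.unitaryGroup (Fin n) ℂ,
      (B : Matrix (Fin n) (Fin n) ℂ) i i *
        ((B⁻¹ : Matrix.unitaryGroup (Fin n) ℂ) : Matrix (Fin n) (Fin n) ℂ) j j ∂μ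
      = if i = j then 1 / (n : ℂ) else 0 := by
  have h2 : ∀ B : Matrix.unitaryGroup (Fin n) ℂ,
      (((B : Matrix (Fin n) (Fin n) ℂ) * Matrix.single i j 1 *
        ((B⁻¹ : Matrix.unitaryGroup (Fin n) ℂ) : Matrix (Fin n) (Fin n) ℂ) :
        Matrix (Fin n) (Fin n) ℂ)) i j
      = (B : Matrix (Fin n) (Fin n) ℂ) i i *
        ((B⁻¹ : Matrix.unitaryGroup (Fin n) ℂ) : Matrix (Fin n) (Fin n) ℂ) j j := by
    intro B
    rw [Matrix.mul_apply]
    have : ∀ l : Fin n, (((B : Matrix (Fin n) (Fin n) ℂ) * Matrix.single i j 1 :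
        Matrix (Fin n) (Fin n) ℂ)) i l *
        ((B⁻¹ : Matrix.unitaryGroup (Fin n) ℂ) : Matrix (Fin n) (Fin n) ℂ) l j
        = (if l = j then (B : Matrix (Fin n) (Fin n) ℂ) i i *
            ((B⁻¹ : Matrix.unitaryGroup (Fin n) ℂ) : Matrix (Fin n) (Fin n) ℂ) l j else 0) := by
      intro l
      rw [Matrix.mul_apply]
      by_cases hl : l = j
      · subst hl
        simp [Matrix.single, Finset.sum_ite_eq, Finset.sum_ite_eq']
      · rw [if_neg hl]
        refine mul_eq_zero.mpr (Or.inl (Finset.sum_eq_zero fun x _ => ?_))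
        simp [Matrix.single, Ne.symm hl]
    rw [Finset.sum_congr rfl fun l _ => this l, Finset.sum_ite_eq' Finset.univ j]
    simp
  have htr : Matrix.trace (Matrix.single i j (1:ℂ)) = if i = j then 1 else 0 := by
    by_cases hij : i = j
    · subst hij; simp [Matrix.trace, Matrix.diag, Matrix.single, Finset.sum_ite_eq]
    · rw [Matrix.trace, Finset.sum_eq_zero, if_neg hij]
      intro k _
      simp only [Matrix.diag, Matrix.single, Matrix.of_apply, ite_eq_right_iff]
      rintro ⟨rfl, rfl⟩
      exact absurd rfl hij
  calc ∫ B : Matrix.unitaryGroup (Fin n) ℂ,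
      (B : Matrix (Fin n) (Fin n) ℂ) i i *
        ((B⁻¹ : Matrix.unitaryGroup (Fin n) ℂ) : Matrix (Fin n) (Fin n) ℂ) j j ∂μ
      = ∫ B : Matrix.unitaryGroup (Fin n) ℂ,
        (((B : Matrix (Fin n) (Fin n) ℂ) * Matrix.single i j 1 *
          ((B⁻¹ : Matrix.unitaryGroup (Fin n) ℂ) : Matrix (Fin n) (Fin n) ℂ) :
          Matrix (Fin n) (Fin n) ℂ)) i j ∂μ :=
      integral_congr_ae (Filter.Eventually.of_forall fun B => (h2 B).symm)
  _ = (Matrix.trace (Matrix.single i j (1:ℂ)) / n) * (if i = j then 1 else 0) :=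
      conjInt_entry_eq μ hn _ i j
  _ = if i = j then 1 / (n : ℂ) else 0 := by
      rw [htr]
      by_cases hij : i = j <;> simp [hij]

lemma integrable_entry_prod (i j : Fin n) :
    Integrable (fun B : Matrix.unitaryGroup (Fin n) ℂ =>
      (B : Matrix (Fin n) (Fin n) ℂ) i i *
        ((B⁻¹ : Matrix.unitaryGroup (Fin n) ℂ) : Matrix (Fin n) (Fin n) ℂ) j j) μ :=
  cont_integrable μ ((cont_coe.matrix_elem i i).mul (cont_coe_inv.matrix_elem j j))

lemma integral_trace_mul_trace_inv (hn : 1 ≤ n) :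
    ∫ A : Matrix.unitaryGroup (Fin n) ℂ,
      Matrix.trace (A : Matrix (Fin n) (Fin n) ℂ) *
        Matrix.trace ((A⁻¹ : Matrix.unitaryGroup (Fin n) ℂ) : Matrix (Fin n) (Fin n) ℂ) ∂μ
      = 1 := by
  have hne : (n : ℂ) ≠ 0 := Nat.cast_ne_zero.mpr (by omega)
  have h : ∀ A : Matrix.unitaryGroup (Fin n) ℂ,
      Matrix.trace (A : Matrix (Fin n) (Fin n) ℂ) *
        Matrix.trace ((A⁻¹ : Matrix.unitaryGroup (Fin n) ℂ) : Matrix (Fin n) (Fin n) ℂ)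
      = ∑ i, ∑ j, (A : Matrix (Fin n) (Fin n) ℂ) i i *
          ((A⁻¹ : Matrix.unitaryGroup (Fin n) ℂ) : Matrix (Fin n) (Fin n) ℂ) j j := by
    intro A
    rw [Matrix.trace, Matrix.trace, Finset.sum_mul_sum]
    rfl
  rw [integral_congr_ae (Filter.Eventually.of_forall h),
    integral_finset_sum _ (fun i _ => integrable_finset_sum _ fun j _ =>
      integrable_entry_prod μ i j)]
  have : ∀ i : Fin n, (∫ A : Matrix.unitaryGroup (Fin n) ℂ,
      ∑ j, (A : Matrix (Fin n) (Fin n) ℂ) i i *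
        ((A⁻¹ : Matrix.unitaryGroup (Fin n) ℂ) : Matrix (Fin n) (Fin n) ℂ) j j ∂μ)
      = 1 / (n : ℂ) := by
    intro i
    rw [integral_finset_sum _ (fun j _ => integrable_entry_prod μ i j)]
    rw [Finset.sum_congr rfl fun j _ => entry_prod_integral μ hn i j]
    simp
  rw [Finset.sum_congr rfl fun i _ => this i, Finset.sum_const, Finset.card_univ,
    Fintype.card_fin, nsmul_eq_mul]
  field_simp

lemma inner_integral (hn : 1 ≤ n) (A : Matrix.unitaryGroup (Fin n) ℂ) :
    ∫ B : Matrix.unitaryGroup (Fin n) ℂ,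
      Matrix.trace ((A : Matrix (Fin n) (Fin n) ℂ) * (B : Matrix (Fin n) (Fin n) ℂ) *
        ((A⁻¹ : Matrix.unitaryGroup (Fin n) ℂ) : Matrix (Fin n) (Fin n) ℂ) *
        ((B⁻¹ : Matrix.unitaryGroup (Fin n) ℂ) : Matrix (Fin n) (Fin n) ℂ)) ∂μ
      = Matrix.trace (A : Matrix (Fin n) (Fin n) ℂ) *
        Matrix.trace ((A⁻¹ : Matrix.unitaryGroup (Fin n) ℂ) : Matrix (Fin n) (Fin n) ℂ) / n := by
  set Ainv : Matrix (Fin n) (Fin n) ℂ :=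
    ((A⁻¹ : Matrix.unitaryGroup (Fin n) ℂ) : Matrix (Fin n) (Fin n) ℂ) with hAinv
  have h : ∀ B : Matrix.unitaryGroup (Fin n) ℂ,
      Matrix.trace ((A : Matrix (Fin n) (Fin n) ℂ) * (B : Matrix (Fin n) (Fin n) ℂ) * Ainv *
        ((B⁻¹ : Matrix.unitaryGroup (Fin n) ℂ) : Matrix (Fin n) (Fin n) ℂ))
      = ∑ i, ∑ j, ((B : Matrix (Fin n) (Fin n) ℂ) * Ainv *
          ((B⁻¹ : Matrix.unitaryGroup (Fin n) ℂ) : Matrix (Fin n) (Fin n) ℂ)) i j *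
          (A : Matrix (Fin n) (Fin n) ℂ) j i := by
    intro B
    have hassoc : (A : Matrix (Fin n) (Fin n) ℂ) * (B : Matrix (Fin n) (Fin n) ℂ) * Ainv *
        ((B⁻¹ : Matrix.unitaryGroup (Fin n) ℂ) : Matrix (Fin n) (Fin n) ℂ)
        = (A : Matrix (Fin n) (Fin n) ℂ) * ((B : Matrix (Fin n) (Fin n) ℂ) * Ainv *
          ((B⁻¹ : Matrix.unitaryGroup (Fin n) ℂ) : Matrix (Fin n) (Fin n) ℂ)) := by
      rw [mul_assoc, mul_assoc, mul_assoc]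
    rw [hassoc, Matrix.trace_mul_comm, Matrix.trace]
    simp only [Matrix.diag, Matrix.mul_apply]
  rw [integral_congr_ae (Filter.Eventually.of_forall h),
    integral_finset_sum _ (fun i _ => integrable_finset_sum _ fun j _ =>
      (integrable_entry μ Ainv i j).mul_const _)]
  have hval : ∀ i : Fin n, (∫ B : Matrix.unitaryGroup (Fin n) ℂ,
      ∑ j, ((B : Matrix (Fin n) (Fin n) ℂ) * Ainv *
        ((B⁻¹ : Matrix.unitaryGroup (Fin n) ℂ) : Matrix (Fin n) (Fin n) ℂ)) i j *
        (A : Matrix (Fin n) (Fin n) ℂ) j i ∂μ)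
      = (Matrix.trace Ainv / n) * (A : Matrix (Fin n) (Fin n) ℂ) i i := by
    intro i
    rw [integral_finset_sum _ (fun j _ => (integrable_entry μ Ainv i j).mul_const _)]
    have : ∀ j : Fin n, (∫ B : Matrix.unitaryGroup (Fin n) ℂ,
        ((B : Matrix (Fin n) (Fin n) ℂ) * Ainv *
          ((B⁻¹ : Matrix.unitaryGroup (Fin n) ℂ) : Matrix (Fin n) (Fin n) ℂ)) i j *
          (A : Matrix (Fin n) (Fin n) ℂ) j i ∂μ)
        = ((Matrix.trace Ainv / n) * (if i = j then 1 else 0)) *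
            (A : Matrix (Fin n) (Fin n) ℂ) j i := by
      intro j
      rw [integral_mul_const, conjInt_entry_eq μ hn Ainv i j]
    rw [Finset.sum_congr rfl fun j _ => this j]
    simp [Finset.sum_ite_eq, mul_ite, ite_mul]
  rw [Finset.sum_congr rfl fun i _ => hval i, ← Finset.mul_sum]
  rw [Matrix.trace, Matrix.trace]
  simp only [Matrix.diag]
  ring


end TrwAux

open TrwAux Matrix

/-- For `w = [x,y]` in the free group `F₂` and every `n ≥ 1`,
`Tr_{[x,y]}(n) = 1/n`. -/
theorem trw_commutator (n : ℕ) (hn : 1 ≤ n)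
    (μ : Measure (Matrix.unitaryGroup (Fin n) ℂ)) [μ.IsHaarMeasure]
    [IsProbabilityMeasure μ] :
    trwl 2 n 1 μ (fun _ => ⁅FreeGroup.of (0 : Fin 2), FreeGroup.of (1 : Fin 2)⁆) =
      1 / (n : ℂ) := by
  have hword : ∀ A : Fin 2 → Matrix.unitaryGroup (Fin n) ℂ,
      (FreeGroup.lift A ⁅FreeGroup.of (0 : Fin 2), FreeGroup.of (1 : Fin 2)⁆ :
        Matrix.unitaryGroup (Fin n) ℂ) = A 0 * A 1 * (A 0)⁻¹ * (A 1)⁻¹ := by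
    intro A
    rw [map_commutatorElement, commutatorElement_def]
    simp [FreeGroup.lift_apply_of]
  have hint : ∀ A : Fin 2 → Matrix.unitaryGroup (Fin n) ℂ,
      (∏ i : Fin 1, Matrix.trace
        ((FreeGroup.lift A ((fun _ : Fin 1 =>
          ⁅FreeGroup.of (0 : Fin 2), FreeGroup.of (1 : Fin 2)⁆) i) :
          Matrix.unitaryGroup (Fin n) ℂ) : Matrix (Fin n) (Fin n) ℂ))
      = Matrix.trace (((A 0 : Matrix.unitaryGroup (Fin n) ℂ) : Matrix (Fin n) (Fin n) ℂ) *
          ((A 1 : Matrix.unitaryGroup (Fin n) ℂ) : Matrix (Fin n) (Fin n) ℂ) *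
          (((A 0)⁻¹ : Matrix.unitaryGroup (Fin n) ℂ) : Matrix (Fin n) (Fin n) ℂ) *
          (((A 1)⁻¹ : Matrix.unitaryGroup (Fin n) ℂ) : Matrix (Fin n) (Fin n) ℂ)) := by
    intro A
    rw [Fin.prod_univ_one, hword]
    simp [MulMemClass.coe_mul]
  have step1 : trwl 2 n 1 μ (fun _ => ⁅FreeGroup.of (0 : Fin 2), FreeGroup.of (1 : Fin 2)⁆)
      = ∫ A : Fin 2 → Matrix.unitaryGroup (Fin n) ℂ,
        Matrix.trace (((A 0 : Matrix.unitaryGroup (Fin n) ℂ) : Matrix (Fin n) (Fin n) ℂ) *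
          ((A 1 : Matrix.unitaryGroup (Fin n) ℂ) : Matrix (Fin n) (Fin n) ℂ) *
          (((A 0)⁻¹ : Matrix.unitaryGroup (Fin n) ℂ) : Matrix (Fin n) (Fin n) ℂ) *
          (((A 1)⁻¹ : Matrix.unitaryGroup (Fin n) ℂ) : Matrix (Fin n) (Fin n) ℂ))
        ∂(Measure.pi fun _ : Fin 2 => μ) :=
    integral_congr_ae (Filter.Eventually.of_forall hint)
  set f : (Matrix.unitaryGroup (Fin n) ℂ × Matrix.unitaryGroup (Fin n) ℂ) → ℂ :=
    fun p => Matrix.trace (((p.1 : Matrix.unitaryGroup (Fin n) ℂ) : Matrix (Fin n) (Fin n) ℂ) *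
      ((p.2 : Matrix.unitaryGroup (Fin n) ℂ) : Matrix (Fin n) (Fin n) ℂ) *
      ((p.1⁻¹ : Matrix.unitaryGroup (Fin n) ℂ) : Matrix (Fin n) (Fin n) ℂ) *
      ((p.2⁻¹ : Matrix.unitaryGroup (Fin n) ℂ) : Matrix (Fin n) (Fin n) ℂ)) with hf
  have hcont : Continuous f := by
    apply Continuous.matrix_trace
    exact (((cont_coe.comp continuous_fst).matrix_mul
      (cont_coe.comp continuous_snd)).matrix_mul
      (cont_coe_inv.comp continuous_fst)).matrix_mul
      (cont_coe_inv.comp continuous_snd)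
  have hintf : Integrable f (μ.prod μ) :=
    hcont.integrable_of_hasCompactSupport (HasCompactSupport.of_compactSpace f)
  have step2 : (∫ A : Fin 2 → Matrix.unitaryGroup (Fin n) ℂ,
      Matrix.trace (((A 0 : Matrix.unitaryGroup (Fin n) ℂ) : Matrix (Fin n) (Fin n) ℂ) *
        ((A 1 : Matrix.unitaryGroup (Fin n) ℂ) : Matrix (Fin n) (Fin n) ℂ) *
        (((A 0)⁻¹ : Matrix.unitaryGroup (Fin n) ℂ) : Matrix (Fin n) (Fin n) ℂ) *
        (((A 1)⁻¹ : Matrix.unitaryGroup (Fin n) ℂ) : Matrix (Fin n) (Fin n) ℂ))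
      ∂(Measure.pi fun _ : Fin 2 => μ)) = ∫ p, f p ∂(μ.prod μ) :=
    (measurePreserving_piFinTwo (fun _ : Fin 2 => μ)).integral_comp
      (MeasurableEquiv.piFinTwo (fun _ : Fin 2 => Matrix.unitaryGroup (Fin n) ℂ)).measurableEmbedding f
  rw [step1, step2, MeasureTheory.integral_prod _ hintf]
  have step3 : ∀ A : Matrix.unitaryGroup (Fin n) ℂ,
      (∫ B : Matrix.unitaryGroup (Fin n) ℂ, f (A, B) ∂μ)
      = Matrix.trace (A : Matrix (Fin n) (Fin n) ℂ) *
        Matrix.trace ((A⁻¹ : Matrix.unitaryGroup (Fin n) ℂ) : Matrix (Fin n) (Fin n) ℂ) / n :=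
    fun A => TrwAux.inner_integral μ hn A
  rw [integral_congr_ae (Filter.Eventually.of_forall step3), integral_div,
    TrwAux.integral_trace_mul_trace_inv μ hn]
end
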